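/- arXiv:1402.1396 — 8 statements merged into one kernel-verified Lean document; each statement's English description precedes it below -/
import Mathlib

section
/- All complex roots of a nonconstant polynomial equation c_0 x^n = c_1 x^{n-1} + ... + c_{n-1} x + c_n with c_0 ≠ 0 have absolute value at most 2 · max_{p=1,...,n} |c_p / c_0|^{1/p} (Fujiwara's bound). -/
open Finset

lemma fujiwara_geo (n : ℕ) : ∑ p ∈ Finset.Icc 1 n, (1/2:ℝ)^p = 1 - (1/2)^n := by
  induction n with
  | zero => simp
  | succ k ih =>
    rw [Finset.sum_Icc_succ_top (by omega), ih]; ring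

/-- Fujiwara's bound: all complex roots of a nonconstant polynomial equation
`c 0 * x ^ n = c 1 * x ^ (n-1) + ... + c n` with `c 0 ≠ 0` have absolute value at most
`2 * max_{1 ≤ p ≤ n} |c p / c 0| ^ (1/p)`. -/
theorem fujiwara_bound (n : ℕ) (hn : 1 ≤ n) (c : ℕ → ℂ) (hc0 : c 0 ≠ 0) (x : ℂ)
    (hx : c 0 * x ^ n = ∑ p ∈ Finset.Icc 1 n, c p * x ^ (n - p)) :
    ‖x‖ ≤
      2 * (Finset.Icc 1 n).sup' (Finset.nonempty_Icc.mpr hn)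
        (fun p => ‖c p / c 0‖ ^ ((p : ℝ)⁻¹)) := by
  set M := (Finset.Icc 1 n).sup' (Finset.nonempty_Icc.mpr hn)
        (fun p => ‖c p / c 0‖ ^ ((p : ℝ)⁻¹)) with hM
  by_contra h
  push_neg at h
  set r := ‖x‖ with hr
  have hM0 : 0 ≤ M := by
    have h1 : (1:ℕ) ∈ Finset.Icc 1 n := Finset.mem_Icc.mpr ⟨le_refl 1, hn⟩
    calc (0:ℝ) ≤ ‖c 1 / c 0‖ ^ ((1:ℕ):ℝ)⁻¹ :=
          Real.rpow_nonneg (norm_nonneg _) _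
      _ ≤ M := Finset.le_sup' (fun p => ‖c p / c 0‖ ^ ((p : ℝ))⁻¹) h1
  have hrpos : 0 < r := by linarith
  have hx' : x ^ n = ∑ p ∈ Finset.Icc 1 n, (c p / c 0) * x ^ (n - p) := by
    apply mul_left_cancel₀ hc0
    rw [hx, Finset.mul_sum]
    refine Finset.sum_congr rfl fun p _ => ?_
    field_simp
  have key : r ^ n ≤ ∑ p ∈ Finset.Icc 1 n, M ^ p * r ^ (n - p) := by
    calc r ^ n = ‖x ^ n‖ := (norm_pow _ _).symm
      _ = ‖∑ p ∈ Finset.Icc 1 n, (c p / c 0) * x ^ (n - p)‖ := by rw [hx']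
      _ ≤ ∑ p ∈ Finset.Icc 1 n, ‖(c p / c 0) * x ^ (n - p)‖ :=
          norm_sum_le _ _
      _ ≤ ∑ p ∈ Finset.Icc 1 n, M ^ p * r ^ (n - p) := by
          refine Finset.sum_le_sum fun p hp => ?_
          rw [norm_mul, norm_pow]
          have hp1 : 1 ≤ p := (Finset.mem_Icc.mp hp).1
          have hle : ‖c p / c 0‖ ^ ((p : ℝ))⁻¹ ≤ M := Finset.le_sup' (fun p => ‖c p / c 0‖ ^ ((p : ℝ))⁻¹) hp
          have habs : ‖c p / c 0‖ ≤ M ^ p := by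
            have := pow_le_pow_left₀ (Real.rpow_nonneg (norm_nonneg _) _) hle p
            rwa [Real.rpow_inv_natCast_pow (norm_nonneg _) (by omega)] at this
          exact mul_le_mul_of_nonneg_right habs (pow_nonneg (norm_nonneg _) _)
  have key2 : ∑ p ∈ Finset.Icc 1 n, M ^ p * r ^ (n - p)
      < ∑ p ∈ Finset.Icc 1 n, (1/2:ℝ) ^ p * r ^ n := by
    refine Finset.sum_lt_sum_of_nonempty (Finset.nonempty_Icc.mpr hn) fun p hp => ?_
    obtain ⟨hp1, hpn⟩ := Finset.mem_Icc.mp hp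
    have h1 : M ^ p < (r / 2) ^ p :=
      pow_lt_pow_left₀ (by linarith) hM0 (by omega)
    have h2 : M ^ p * r ^ (n - p) < (r / 2) ^ p * r ^ (n - p) :=
      mul_lt_mul_of_pos_right h1 (pow_pos hrpos _)
    calc M ^ p * r ^ (n - p) < (r / 2) ^ p * r ^ (n - p) := h2
      _ = (1/2:ℝ) ^ p * r ^ n := by
          rw [div_pow, div_pow, one_pow, div_mul_eq_mul_div, div_mul_eq_mul_div,
            ← pow_add, Nat.add_sub_cancel' hpn, one_mul]
  rw [← Finset.sum_mul, fujiwara_geo] at key2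
  have hpow : (0:ℝ) < (1/2:ℝ) ^ n := by positivity
  have hrn : (0:ℝ) < r ^ n := pow_pos hrpos n
  nlinarith
end

section
/- For positive reals x_1,...,x_κ with κ ≥ n, and any p with 1 ≤ p ≤ n, one has (s_{n-p}(x)/s_n(x))^{1/p} ≤ s_{n-1}(x)/s_n(x). -/
open Finset

/-- the `j`-th elementary symmetric polynomial of `x 1, ..., x κ`. -/
noncomputable def esymmEval (κ : ℕ) (x : Fin κ → ℝ) (j : ℕ) : ℝ :=
  ∑ A ∈ Finset.powersetCard j (Finset.univ : Finset (Fin κ)), ∏ i ∈ A, x i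

namespace EsymmAux

lemma esymm_zero' (s : Multiset ℝ) : s.esymm 0 = 1 := by
  simp [Multiset.esymm]

lemma esymm_cons (a : ℝ) (s : Multiset ℝ) (n : ℕ) :
    (a ::ₘ s).esymm (n + 1) = s.esymm (n + 1) + a * s.esymm n := by
  simp only [Multiset.esymm, Multiset.powersetCard_cons, Multiset.map_add, Multiset.sum_add,
    Multiset.map_map, Function.comp_def, Multiset.prod_cons]
  rw [Multiset.sum_map_mul_left]

lemma esymm_eq_zero (s : Multiset ℝ) (k : ℕ) (h : Multiset.card s < k) :
    s.esymm k = 0 := by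
  simp [Multiset.esymm, Multiset.powersetCard_eq_empty k h]

lemma esymm_pos (s : Multiset ℝ) (hs : ∀ y ∈ s, 0 < y) (k : ℕ) (h : k ≤ Multiset.card s) :
    0 < s.esymm k := by
  induction s using Multiset.induction generalizing k with
  | empty =>
    simp only [Multiset.card_zero, Nat.le_zero] at h
    subst h; simp [esymm_zero']
  | cons a t ih =>
    rcases k with _ | k
    · simp [esymm_zero']
    · rw [esymm_cons]
      have ha : 0 < a := hs a (Multiset.mem_cons_self a t)
      have ht : ∀ y ∈ t, 0 < y := fun y hy => hs y (Multiset.mem_cons_of_mem hy)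
      simp only [Multiset.card_cons] at h
      have hk : k ≤ Multiset.card t := Nat.lt_succ_iff.mp h
      rcases le_or_gt (k + 1) (Multiset.card t) with h1 | h1
      · exact add_pos (ih ht _ h1) (mul_pos ha (ih ht _ hk))
      · rw [esymm_eq_zero t _ h1, zero_add]
        exact mul_pos ha (ih ht _ hk)

lemma esymm_nonneg (s : Multiset ℝ) (hs : ∀ y ∈ s, 0 < y) (k : ℕ) :
    0 ≤ s.esymm k := by
  rcases le_or_gt k (Multiset.card s) with h | h
  · exact (esymm_pos s hs k h).le
  · rw [esymm_eq_zero s k h]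

/-- log-concavity of elementary symmetric polynomials -/
lemma esymm_log_concave (s : Multiset ℝ) (hs : ∀ y ∈ s, 0 < y) (k : ℕ) :
    s.esymm k * s.esymm (k + 2) ≤ s.esymm (k + 1) ^ 2 := by
  induction s using Multiset.induction generalizing k with
  | empty =>
    have : (0 : Multiset ℝ).esymm (k + 2) = 0 := esymm_eq_zero _ _ (by simp)
    rw [this, mul_zero]
    positivity
  | cons a t ih =>
    have ha : 0 < a := hs a (Multiset.mem_cons_self a t)
    have ht : ∀ y ∈ t, 0 < y := fun y hy => hs y (Multiset.mem_cons_of_mem hy)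
    have hnn : ∀ j, 0 ≤ t.esymm j := esymm_nonneg t ht
    -- cross inequality: e_k * e_{k+3} ≤ e_{k+1} * e_{k+2}
    have cross : ∀ m : ℕ, t.esymm m * t.esymm (m + 3) ≤ t.esymm (m + 1) * t.esymm (m + 2) := by
      intro m
      rcases le_or_gt (m + 3) (Multiset.card t) with h3 | h3
      · have p1 : 0 < t.esymm (m + 1) := esymm_pos t ht _ (by omega)
        have p2 : 0 < t.esymm (m + 2) := esymm_pos t ht _ (by omega)
        have i1 := ih ht m
        have i2 := ih ht (m + 1)
        have key : (t.esymm m * t.esymm (m + 3)) * (t.esymm (m + 1) * t.esymm (m + 2)) ≤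
            (t.esymm (m + 1) * t.esymm (m + 2)) * (t.esymm (m + 1) * t.esymm (m + 2)) := by
          have h2 : t.esymm (m + 1) * t.esymm (m + 1 + 2) ≤ t.esymm (m + 2) ^ 2 := i2
          have hmul : (t.esymm m * t.esymm (m + 2)) * (t.esymm (m + 1) * t.esymm (m + 3)) ≤
              t.esymm (m + 1) ^ 2 * t.esymm (m + 2) ^ 2 :=
            mul_le_mul i1 (by linarith) (mul_nonneg (hnn _) (hnn _)) (sq_nonneg _)
          linear_combination hmul
        exact le_of_mul_le_mul_right (by linarith [key]) (mul_pos p1 p2)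
      · rw [esymm_eq_zero t _ h3, mul_zero]
        exact mul_nonneg (hnn _) (hnn _)
    rcases k with _ | m
    · -- k = 0
      rw [esymm_zero', one_mul, esymm_cons, esymm_cons, esymm_zero']
      have i0 := ih ht 0
      rw [esymm_zero', one_mul] at i0
      nlinarith [hnn 0, hnn 1, hnn 2, ha.le]
    · rw [esymm_cons, esymm_cons, esymm_cons]
      have i1 := ih ht m
      have i2 := ih ht (m + 1)
      have hc := cross m
      nlinarith [hnn m, hnn (m+1), hnn (m+2), hnn (m+3), ha.le, sq_nonneg a,
        mul_nonneg ha.le ha.le]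

/-- ratio monotonicity: e_j * e_{k+1} ≤ e_{j+1} * e_k for j ≤ k ≤ card -/
lemma esymm_ratio_mono (s : Multiset ℝ) (hs : ∀ y ∈ s, 0 < y) (j k : ℕ)
    (hjk : j ≤ k) (hk : k ≤ Multiset.card s) :
    s.esymm j * s.esymm (k + 1) ≤ s.esymm (j + 1) * s.esymm k := by
  induction k, hjk using Nat.le_induction with
  | base => rw [mul_comm]
  | succ k hjk ih =>
    have hk' : k ≤ Multiset.card s := by omega
    have ihh := ih hk'
    have lc := esymm_log_concave s hs k
    have p1 : 0 < s.esymm k := esymm_pos s hs _ hk'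
    have p2 : 0 < s.esymm (k + 1) := esymm_pos s hs _ hk
    have hnn : ∀ j, 0 ≤ s.esymm j := esymm_nonneg s hs
    have key : (s.esymm j * s.esymm (k + 2)) * (s.esymm k * s.esymm (k + 1)) ≤
        (s.esymm (j + 1) * s.esymm (k + 1)) * (s.esymm k * s.esymm (k + 1)) := by
      have hmul : (s.esymm j * s.esymm (k + 1)) * (s.esymm k * s.esymm (k + 2)) ≤
          (s.esymm (j + 1) * s.esymm k) * s.esymm (k + 1) ^ 2 :=
        mul_le_mul ihh lc (mul_nonneg (hnn _) (hnn _)) (mul_nonneg (hnn _) (hnn _))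
      linear_combination hmul
    exact le_of_mul_le_mul_right key (mul_pos p1 p2)

lemma esymm_prod_bound (s : Multiset ℝ) (hs : ∀ y ∈ s, 0 < y) (n p : ℕ)
    (hpn : p ≤ n) (hn : n ≤ Multiset.card s) :
    s.esymm (n - p) * s.esymm n ^ p ≤ s.esymm n * s.esymm (n - 1) ^ p := by
  induction p with
  | zero => simp
  | succ p ih =>
    have hpn' : p ≤ n := by omega
    have ihh := ih hpn'
    have hnn : ∀ j, 0 ≤ s.esymm j := esymm_nonneg s hs
    have hratio : s.esymm (n - p - 1) * s.esymm n ≤ s.esymm (n - p) * s.esymm (n - 1) := by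
      have h1 : n - p - 1 + 1 = n - p := by omega
      have h2 : n - 1 + 1 = n := by omega
      have := esymm_ratio_mono s hs (n - p - 1) (n - 1) (by omega) (by omega)
      rw [h1, h2] at this
      exact this
    have hnp1 : n - (p + 1) = n - p - 1 := by omega
    rw [hnp1, pow_succ, pow_succ]
    calc s.esymm (n - p - 1) * (s.esymm n ^ p * s.esymm n)
        = (s.esymm (n - p - 1) * s.esymm n) * s.esymm n ^ p := by ring
      _ ≤ (s.esymm (n - p) * s.esymm (n - 1)) * s.esymm n ^ p := by
          exact mul_le_mul_of_nonneg_right hratio (pow_nonneg (hnn n) p)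
      _ = s.esymm (n - 1) * (s.esymm (n - p) * s.esymm n ^ p) := by ring
      _ ≤ s.esymm (n - 1) * (s.esymm n * s.esymm (n - 1) ^ p) := by
          exact mul_le_mul_of_nonneg_left ihh (hnn (n - 1))
      _ = s.esymm n * (s.esymm (n - 1) ^ p * s.esymm (n - 1)) := by ring

end EsymmAux

/-- For positive reals `x_1, ..., x_κ` with `κ ≥ n` and `1 ≤ p ≤ n`, one has
`(s_{n-p}(x)/s_n(x))^(1/p) ≤ s_{n-1}(x)/s_n(x)`. -/
theorem esymm_ratio_rpow_le (κ n p : ℕ) (hnκ : n ≤ κ) (hp1 : 1 ≤ p) (hpn : p ≤ n)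
    (x : Fin κ → ℝ) (hx : ∀ i, 0 < x i) :
    (esymmEval κ x (n - p) / esymmEval κ x n) ^ ((p : ℝ)⁻¹) ≤
      esymmEval κ x (n - 1) / esymmEval κ x n := by
  classical
  set s : Multiset ℝ := Multiset.map x (Finset.univ : Finset (Fin κ)).val with hsdef
  have hcard : Multiset.card s = κ := by simp [hsdef]
  have hs : ∀ y ∈ s, 0 < y := by
    intro y hy
    rw [hsdef] at hy
    obtain ⟨i, _, rfl⟩ := Multiset.mem_map.mp hy
    exact hx i
  have heq : ∀ j, esymmEval κ x j = s.esymm j := by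
    intro j
    rw [hsdef, Finset.esymm_map_val x Finset.univ j]
    rfl
  rw [heq, heq, heq]
  have hn_pos : 0 < s.esymm n := EsymmAux.esymm_pos s hs n (by omega)
  have hnp_pos : 0 < s.esymm (n - p) := EsymmAux.esymm_pos s hs _ (by omega)
  have hn1_pos : 0 < s.esymm (n - 1) := EsymmAux.esymm_pos s hs _ (by omega)
  have hbound := EsymmAux.esymm_prod_bound s hs n p hpn (by omega)
  have hdiv : s.esymm (n - p) / s.esymm n ≤ (s.esymm (n - 1) / s.esymm n) ^ p := by
    rw [div_pow, div_le_div_iff₀ hn_pos (pow_pos hn_pos p)]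
    calc s.esymm (n - p) * s.esymm n ^ p ≤ s.esymm n * s.esymm (n - 1) ^ p := hbound
      _ = s.esymm (n - 1) ^ p * s.esymm n := by ring
  have hnonneg : 0 ≤ s.esymm (n - p) / s.esymm n := le_of_lt (div_pos hnp_pos hn_pos)
  have hrnn : 0 ≤ s.esymm (n - 1) / s.esymm n := le_of_lt (div_pos hn1_pos hn_pos)
  have hinv : (0:ℝ) ≤ (p : ℝ)⁻¹ := by positivity
  calc (s.esymm (n - p) / s.esymm n) ^ ((p : ℝ)⁻¹)
      ≤ ((s.esymm (n - 1) / s.esymm n) ^ p) ^ ((p : ℝ)⁻¹) :=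
        Real.rpow_le_rpow hnonneg hdiv hinv
    _ = s.esymm (n - 1) / s.esymm n :=
        Real.pow_rpow_inv_natCast hrnn (by omega)
end

section
/- Let κ ≥ n ≥ 1 be integers, a_1 > ... > a_κ > 0 positive integers, μ = 1·a_1 + 2·a_2 + ... + κ·a_κ, n_κ = n + κ(n-1), and for 0 ≤ p ≤ n set f_p(t) = (2μ)^p · (n_κ!/(n_κ-p)!) · (a_1 t_1 + ... + a_κ t_κ)^{n_κ-p}. Then the coefficient of t_1^n ⋯ t_κ^n in f_p(t) · s_{κ-n+p}(t) equals (2μ)^n · (n_κ!/((n-1)!)^κ) · (a_1⋯a_κ)^{n-1} · s_{n-p}(a_1/(2nμ), ..., a_κ/(2nμ)). -/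
open Finset MvPolynomial



lemma coeff_linear_pow {κ : ℕ} (a : Fin κ → ℚ) (N : ℕ) (d : Fin κ →₀ ℕ) :
    MvPolynomial.coeff d ((∑ i : Fin κ, MvPolynomial.C (a i) * MvPolynomial.X i) ^ N) =
    if ∑ i, d i = N then (Nat.multinomial Finset.univ d : ℚ) * ∏ i, a i ^ d i else 0 := by
  rw [Finset.sum_pow_eq_sum_piAntidiag, MvPolynomial.coeff_sum]
  have key : ∀ k ∈ Finset.piAntidiag (Finset.univ : Finset (Fin κ)) N,
      MvPolynomial.coeff d
        ((Nat.multinomial Finset.univ k : MvPolynomial (Fin κ) ℚ) *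
          ∏ i : Fin κ, (MvPolynomial.C (a i) * MvPolynomial.X i) ^ k i) =
      if k = ⇑d then (Nat.multinomial Finset.univ k : ℚ) * ∏ i, a i ^ k i else 0 := by
    intro k _
    have hprod : ∏ i : Fin κ, (MvPolynomial.C (a i) * MvPolynomial.X i) ^ k i =
        MvPolynomial.C (∏ i, a i ^ k i) *
          MvPolynomial.monomial (Finsupp.equivFunOnFinite.symm k) 1 := by
      rw [MvPolynomial.monomial_eq, MvPolynomial.C_1, one_mul]
      simp only [mul_pow, Finset.prod_mul_distrib, map_prod, map_pow]
      congr 1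
      rw [Finsupp.prod_fintype]
      · rfl
      · intro i; exact pow_zero _
    rw [hprod, ← mul_assoc, MvPolynomial.coeff_mul_monomial',
      ← map_natCast (MvPolynomial.C : ℚ →+* MvPolynomial (Fin κ) ℚ), ← MvPolynomial.C_mul,
      MvPolynomial.coeff_C]
    have hsymm : Finsupp.equivFunOnFinite.symm ⇑d = d := Finsupp.equivFunOnFinite_symm_coe d
    by_cases hk : k = ⇑d
    · rw [if_pos hk, hk, hsymm]
      simp
    · rw [if_neg hk]
      split_ifs with h1 h2
      · exfalso
        apply hk
        have h3 : d ≤ Finsupp.equivFunOnFinite.symm k := tsub_eq_zero_iff_le.mp h2.symm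
        have : Finsupp.equivFunOnFinite.symm k = d := le_antisymm h1 h3
        rw [← this]; rfl
      · rw [mul_one]
      · rfl
  rw [Finset.sum_congr rfl key, Finset.sum_ite_eq' _ (⇑d)]
  by_cases h : ∑ i, d i = N <;> simp [Finset.mem_piAntidiag, h]


lemma term_eval (κ n p : ℕ) (hn : 1 ≤ n) (hnκ : n ≤ κ) (hp : p ≤ n)
    (a : Fin κ → ℕ) (μ : ℕ) (hμ : 0 < μ) (nκ : ℕ) (hnκdef : nκ = n + κ * (n - 1))
    (A : Finset (Fin κ)) (hA : A.card = κ - n + p) :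
    ((2 * μ : ℚ) ^ p * ((nκ.factorial : ℚ) / ((nκ - p).factorial : ℚ))) *
      (Nat.multinomial Finset.univ (fun i => if i ∈ A then n - 1 else n) : ℚ) *
      ∏ i : Fin κ, (a i : ℚ) ^ (if i ∈ A then n - 1 else n) =
    (2 * μ : ℚ) ^ n * ((nκ.factorial : ℚ) / ((n - 1).factorial : ℚ) ^ κ) *
      (∏ i : Fin κ, (a i : ℚ)) ^ (n - 1) * ∏ i ∈ Aᶜ, ((a i : ℚ) / (2 * n * μ)) := by
  obtain ⟨m, rfl⟩ : ∃ m, n = m + 1 := ⟨n - 1, by omega⟩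
  simp only [Nat.add_sub_cancel] at *
  set q := m + 1 - p with hq
  set r := κ - (m + 1) + p with hr
  have hrq : r + q = κ := by omega
  have hpq : p + q = m + 1 := by omega
  have hcardA : A.card = r := hA
  have hcard : Aᶜ.card = q := by
    rw [Finset.card_compl, hA, Fintype.card_fin]; omega
  -- sum of exponents
  have hsum : ∑ i : Fin κ, (if i ∈ A then m else m + 1) = nκ - p := by
    rw [← Finset.sum_add_sum_compl A]
    rw [Finset.sum_congr rfl (fun i hi => if_pos hi),
      Finset.sum_congr rfl (fun i (hi : i ∈ Aᶜ) => if_neg (Finset.mem_compl.mp hi)),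
      Finset.sum_const, Finset.sum_const, hcardA, hcard, smul_eq_mul, smul_eq_mul]
    have : r * m + q * (m + 1) = (r + q) * m + q := by ring
    rw [this, hrq]
    have hcm : ∃ c, κ * m = c := ⟨_, rfl⟩
    obtain ⟨c, hc⟩ := hcm
    rw [hc]; rw [hc] at hnκdef; omega
  -- product of factorials of exponents
  have hprodfac : ∏ i : Fin κ, Nat.factorial (if i ∈ A then m else m + 1) =
      m.factorial ^ r * (m + 1).factorial ^ q := by
    rw [← Finset.prod_mul_prod_compl A]
    rw [Finset.prod_congr rfl (fun i hi => by rw [if_pos hi]),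
      Finset.prod_congr rfl (fun i (hi : i ∈ Aᶜ) => by rw [if_neg (Finset.mem_compl.mp hi)]),
      Finset.prod_const, Finset.prod_const, hcardA, hcard]
  -- multinomial in ℚ
  have hM : (Nat.multinomial Finset.univ (fun i => if i ∈ A then m else m + 1) : ℚ) =
      ((nκ - p).factorial : ℚ) / ((m.factorial : ℚ) ^ r * ((m + 1).factorial : ℚ) ^ q) := by
    have hspec := Nat.multinomial_spec (Finset.univ : Finset (Fin κ))
      (fun i => if i ∈ A then m else m + 1)
    rw [hprodfac, hsum] at hspec
    have h1 : ((m.factorial : ℚ) ^ r * ((m + 1).factorial : ℚ) ^ q) ≠ 0 := by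
      positivity
    rw [eq_div_iff h1]
    have h2 : (Nat.multinomial Finset.univ (fun i => if i ∈ A then m else m + 1)) *
        (m.factorial ^ r * (m + 1).factorial ^ q) = (nκ - p).factorial := by
      rw [mul_comm]; exact hspec
    exact_mod_cast h2
  -- product of a^exponents
  have hprodA : ∏ i : Fin κ, (a i : ℚ) ^ (if i ∈ A then m else m + 1) =
      (∏ i : Fin κ, (a i : ℚ)) ^ m * ∏ i ∈ Aᶜ, (a i : ℚ) := by
    rw [← Finset.prod_mul_prod_compl A]
    rw [Finset.prod_congr rfl (fun i hi => by rw [if_pos hi]),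
      Finset.prod_congr rfl (fun i (hi : i ∈ Aᶜ) => by rw [if_neg (Finset.mem_compl.mp hi)])]
    rw [← Finset.prod_pow, ← Finset.prod_mul_prod_compl A (fun i => (a i : ℚ) ^ m)]
    simp_rw [pow_succ]
    rw [Finset.prod_mul_distrib]
    ring
  -- RHS inner product
  have hprodC : ∏ i ∈ Aᶜ, ((a i : ℚ) / (2 * ((m + 1 : ℕ) : ℚ) * μ)) =
      (∏ i ∈ Aᶜ, (a i : ℚ)) / ((2 * μ : ℚ) ^ q * ((m + 1) : ℚ) ^ q) := by
    rw [Finset.prod_div_distrib, Finset.prod_const, hcard]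
    congr 1
    rw [← mul_pow]
    congr 1
    push_cast
    ring
  rw [hM, hprodA, hprodC]
  have hfac : (((m + 1).factorial : ℚ)) ^ q = ((m + 1 : ℕ) : ℚ) ^ q * (m.factorial : ℚ) ^ q := by
    rw [Nat.factorial_succ]; push_cast; rw [← mul_pow]
  have h2 : ((2 * μ : ℚ)) ^ (m + 1) = (2 * μ : ℚ) ^ p * (2 * μ : ℚ) ^ q := by
    rw [← pow_add, hpq]
  have h3 : ((m.factorial : ℚ)) ^ κ = (m.factorial : ℚ) ^ r * (m.factorial : ℚ) ^ q := by
    rw [← pow_add, hrq]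
  rw [h2, h3, hfac]
  have hm0 : (m.factorial : ℚ) ≠ 0 := by positivity
  have hnk0 : (((nκ - p).factorial : ℚ)) ≠ 0 := by positivity
  have hmu0 : (μ : ℚ) ≠ 0 := by positivity
  have hm1 : ((m + 1 : ℕ) : ℚ) ≠ 0 := by positivity
  push_cast
  field_simp


/-- the `j`-th elementary symmetric function evaluated at rationals `x 1, ..., x κ`. -/
noncomputable def esymmEvalQ (κ : ℕ) (x : Fin κ → ℚ) (j : ℕ) : ℚ :=
  ∑ A ∈ Finset.powersetCard j (Finset.univ : Finset (Fin κ)), ∏ i ∈ A, x i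

lemma exp_sum (κ n p : ℕ) (hn : 1 ≤ n) (hnκ : n ≤ κ) (hp : p ≤ n)
    (nκ : ℕ) (hnκdef : nκ = n + κ * (n - 1))
    (A : Finset (Fin κ)) (hA : A.card = κ - n + p) :
    ∑ i : Fin κ, (if i ∈ A then n - 1 else n) = nκ - p := by
  obtain ⟨m, rfl⟩ : ∃ m, n = m + 1 := ⟨n - 1, by omega⟩
  simp only [Nat.add_sub_cancel] at *
  rw [← Finset.sum_add_sum_compl A]
  rw [Finset.sum_congr rfl (fun i hi => if_pos hi),
    Finset.sum_congr rfl (fun i (hi : i ∈ Aᶜ) => if_neg (Finset.mem_compl.mp hi)),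
    Finset.sum_const, Finset.sum_const, hA, smul_eq_mul, smul_eq_mul,
    Finset.card_compl, hA, Fintype.card_fin]
  have h1 : κ - (κ - (m + 1) + p) = m + 1 - p := by omega
  rw [h1]
  have : (κ - (m + 1) + p) * m + (m + 1 - p) * (m + 1) =
      (κ - (m + 1) + p) * m + (m + 1 - p) * m + (m + 1 - p) := by ring
  rw [this]
  have h2 : (κ - (m + 1) + p) * m + (m + 1 - p) * m = κ * m := by
    rw [← add_mul]
    congr 1
    omega
  rw [h2]
  have hcm : ∃ c, κ * m = c := ⟨_, rfl⟩
  obtain ⟨c, hc⟩ := hcm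
  rw [hc]; rw [hc] at hnκdef; omega

/-- The coefficient of `t_1^n ⋯ t_κ^n` in `f_p(t) · s_{κ-n+p}(t)`, where
`f_p(t) = (2μ)^p (n_κ!/(n_κ-p)!) (a_1 t_1 + ⋯ + a_κ t_κ)^{n_κ - p}`, equals
`(2μ)^n (n_κ!/((n-1)!)^κ) (a_1⋯a_κ)^{n-1} s_{n-p}(a_1/(2nμ), ..., a_κ/(2nμ))`. -/
theorem coeff_fp_mul_esymm (κ n p : ℕ) (hn : 1 ≤ n) (hnκ : n ≤ κ) (hp : p ≤ n)
    (a : Fin κ → ℕ) (ha_pos : ∀ i, 0 < a i)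
    (ha_anti : ∀ i j : Fin κ, i < j → a j < a i)
    (μ : ℕ) (hμ : μ = ∑ i : Fin κ, (i.1 + 1) * a i)
    (nκ : ℕ) (hnκdef : nκ = n + κ * (n - 1)) :
    MvPolynomial.coeff (Finsupp.equivFunOnFinite.symm (fun _ : Fin κ => n))
      ((MvPolynomial.C (((2 * μ : ℚ) ^ p) *
          ((nκ.factorial : ℚ) / ((nκ - p).factorial : ℚ))) *
        (∑ i : Fin κ, MvPolynomial.C (a i : ℚ) * MvPolynomial.X i) ^ (nκ - p)) *
        MvPolynomial.esymm (Fin κ) ℚ (κ - n + p)) =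
      (2 * μ : ℚ) ^ n * ((nκ.factorial : ℚ) / ((n - 1).factorial : ℚ) ^ κ) *
        (∏ i : Fin κ, (a i : ℚ)) ^ (n - 1) *
        esymmEvalQ κ (fun i => (a i : ℚ) / (2 * n * μ)) (n - p) := by
  have hκpos : 0 < κ := lt_of_lt_of_le hn hnκ
  have : NeZero κ := ⟨by omega⟩
  have hμpos : 0 < μ := by
    rw [hμ]
    refine Finset.sum_pos (fun i _ => by have := ha_pos i; positivity) ?_
    exact Finset.univ_nonempty
  set d : Fin κ →₀ ℕ := Finsupp.equivFunOnFinite.symm (fun _ : Fin κ => n) with hd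
  set c : ℚ := ((2 * μ : ℚ) ^ p) * ((nκ.factorial : ℚ) / ((nκ - p).factorial : ℚ)) with hc
  rw [MvPolynomial.esymm_eq_sum_monomial, Finset.mul_sum, MvPolynomial.coeff_sum]
  have hstep : ∀ A ∈ Finset.powersetCard (κ - n + p) (Finset.univ : Finset (Fin κ)),
      MvPolynomial.coeff d ((MvPolynomial.C c *
        (∑ i : Fin κ, MvPolynomial.C (a i : ℚ) * MvPolynomial.X i) ^ (nκ - p)) *
        MvPolynomial.monomial (∑ i ∈ A, Finsupp.single i 1) 1) =
      (2 * μ : ℚ) ^ n * ((nκ.factorial : ℚ) / ((n - 1).factorial : ℚ) ^ κ) *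
        (∏ i : Fin κ, (a i : ℚ)) ^ (n - 1) *
        ∏ i ∈ Aᶜ, ((a i : ℚ) / (2 * n * μ)) := by
    intro A hA
    have hAcard : A.card = κ - n + p := (Finset.mem_powersetCard_univ.mp hA)
    set sA : Fin κ →₀ ℕ := ∑ i ∈ A, Finsupp.single i 1 with hsAdef
    have hsA : ∀ i, sA i = if i ∈ A then 1 else 0 := by
      intro i
      rw [hsAdef, Finsupp.finset_sum_apply]
      rw [Finset.sum_congr rfl (fun j _ => Finsupp.single_apply)]
      exact Finset.sum_ite_eq' A i (fun _ => 1)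
    have hdi : ∀ i, d i = n := fun i => rfl
    have hle : sA ≤ d := by
      intro i
      rw [hsA i, hdi i]
      split_ifs <;> omega
    have hdsA : ⇑(d - sA) = fun i => if i ∈ A then n - 1 else n := by
      funext i
      rw [Finsupp.tsub_apply, hdi i, hsA i]
      split_ifs <;> omega
    rw [MvPolynomial.coeff_mul_monomial', if_pos hle, mul_one,
      MvPolynomial.coeff_C_mul, coeff_linear_pow]
    rw [hdsA]
    rw [if_pos (exp_sum κ n p hn hnκ hp nκ hnκdef A hAcard)]
    rw [← mul_assoc]
    exact term_eval κ n p hn hnκ hp a μ hμpos nκ hnκdef A hAcard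
  rw [Finset.sum_congr rfl hstep]
  rw [esymmEvalQ, Finset.mul_sum]
  refine Finset.sum_nbij' (fun A => Aᶜ) (fun B => Bᶜ) ?_ ?_ ?_ ?_ ?_
  · intro A hA
    rw [Finset.mem_powersetCard_univ] at hA ⊢
    rw [Finset.card_compl, hA, Fintype.card_fin]
    omega
  · intro B hB
    rw [Finset.mem_powersetCard_univ] at hB ⊢
    rw [Finset.card_compl, hB, Fintype.card_fin]
    omega
  · intro A _; exact compl_compl A
  · intro B _; exact compl_compl B
  · intro A _; rfl
end

section
/- Under the setup of the previous statement, defining Ĩ_p = [t_1^n ⋯ t_κ^n](f_p(t) · s_{κ-n+p}(t)), one has Ĩ_p = s_{n-p}(a_1/(2nμ), ..., a_κ/(2nμ)) · Ĩ_n, where Ĩ_n = (2μ)^n · (n_κ!/((n-1)!)^κ) · (a_1⋯a_κ)^{n-1}. -/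
open Finset MvPolynomial

lemma sum_single_eq_symm {κ : ℕ} (k : Fin κ → ℕ) :
    (∑ i : Fin κ, Finsupp.single i (k i)) = Finsupp.equivFunOnFinite.symm k := by
  ext j
  rw [Finset.sum_apply']
  simp [Finsupp.single_apply]

lemma prod_CX_pow {κ : ℕ} (a : Fin κ → ℚ) (k : Fin κ → ℕ) :
    ∏ i : Fin κ, (MvPolynomial.C (a i) * X i) ^ k i =
      monomial (Finsupp.equivFunOnFinite.symm k) (∏ i, a i ^ k i) := by
  rw [← sum_single_eq_symm]
  simp_rw [mul_pow, Finset.prod_mul_distrib, ← map_pow, ← map_prod, X_pow_eq_monomial,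
    ← monomial_sum_one]
  rw [C_mul_monomial, mul_one]

lemma coeff_linpow {κ : ℕ} (a : Fin κ → ℚ) (N : ℕ) (d : Fin κ →₀ ℕ) :
    coeff d ((∑ i : Fin κ, MvPolynomial.C (a i) * X i) ^ N) =
      if (∑ i, d i) = N then (Nat.multinomial univ d : ℚ) * ∏ i, a i ^ d i else 0 := by
  rw [Finset.sum_pow_eq_sum_piAntidiag, MvPolynomial.coeff_sum]
  have key : ∀ k ∈ piAntidiag (univ : Finset (Fin κ)) N,
      coeff d ((Nat.multinomial univ k : MvPolynomial (Fin κ) ℚ) * ∏ i, (MvPolynomial.C (a i) * X i) ^ k i)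
      = if k = ⇑d then (Nat.multinomial univ d : ℚ) * ∏ i, a i ^ d i else 0 := by
    intro k _
    rw [prod_CX_pow, ← MvPolynomial.C_eq_coe_nat, C_mul_monomial, coeff_monomial]
    by_cases h : k = ⇑d
    · subst h
      rw [if_pos (by ext j; simp), if_pos rfl]
    · rw [if_neg (fun hc => h (by rw [← hc]; ext j; simp)), if_neg h]
  rw [Finset.sum_congr rfl key, Finset.sum_ite_eq' (piAntidiag univ N) (⇑d)]
  congr 1
  simp [Finset.mem_piAntidiag]

/-- With `Ĩ_p = [t_1^n ⋯ t_κ^n](f_p(t) · s_{κ-n+p}(t))`, one has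
`Ĩ_p = s_{n-p}(a_1/(2nμ), ..., a_κ/(2nμ)) · Ĩ_n`, where
`Ĩ_n = (2μ)^n (n_κ!/((n-1)!)^κ) (a_1⋯a_κ)^{n-1}`. -/
theorem Itilde_eq (κ n p : ℕ) (hn : 1 ≤ n) (hnκ : n ≤ κ) (hp : p ≤ n)
    (a : Fin κ → ℕ) (ha_pos : ∀ i, 0 < a i)
    (ha_anti : ∀ i j : Fin κ, i < j → a j < a i)
    (μ : ℕ) (hμ : μ = ∑ i : Fin κ, (i.1 + 1) * a i)
    (nκ : ℕ) (hnκdef : nκ = n + κ * (n - 1))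
    (Itilde : ℕ → ℚ)
    (hItilde : ∀ q ≤ n, Itilde q =
      MvPolynomial.coeff (Finsupp.equivFunOnFinite.symm (fun _ : Fin κ => n))
        ((MvPolynomial.C (((2 * μ : ℚ) ^ q) *
            ((nκ.factorial : ℚ) / ((nκ - q).factorial : ℚ))) *
          (∑ i : Fin κ, MvPolynomial.C (a i : ℚ) * MvPolynomial.X i) ^ (nκ - q)) *
          MvPolynomial.esymm (Fin κ) ℚ (κ - n + q)))
    (ItildeN : ℚ)
    (hItildeN : ItildeN = (2 * μ : ℚ) ^ n *
      ((nκ.factorial : ℚ) / ((n - 1).factorial : ℚ) ^ κ) *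
      (∏ i : Fin κ, (a i : ℚ)) ^ (n - 1)) :
    Itilde p = esymmEvalQ κ (fun i => (a i : ℚ) / (2 * n * μ)) (n - p) * ItildeN := by
  simp only [esymmEvalQ]
  subst hnκdef
  -- positivity of μ
  have hκpos : 0 < κ := lt_of_lt_of_le hn hnκ
  have hμpos : 0 < μ := by
    rw [hμ]
    have : Nonempty (Fin κ) := ⟨⟨0, hκpos⟩⟩
    exact Finset.sum_pos (fun i _ => Nat.mul_pos (Nat.succ_pos _) (ha_pos i)) Finset.univ_nonempty
  have hμQ : (μ : ℚ) ≠ 0 := Nat.cast_ne_zero.mpr hμpos.ne'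
  have hnQ : (n : ℚ) ≠ 0 := Nat.cast_ne_zero.mpr (by omega)
  have hFQ : (((n - 1).factorial : ℚ)) ≠ 0 := Nat.cast_ne_zero.mpr (Nat.factorial_ne_zero _)
  have hNQ : ((((n + κ * (n - 1) - p)).factorial : ℚ)) ≠ 0 := Nat.cast_ne_zero.mpr (Nat.factorial_ne_zero _)
  rw [hItilde p hp, esymm_eq_sum_monomial, Finset.mul_sum, MvPolynomial.coeff_sum,
    Finset.sum_mul]
  set m : Fin κ →₀ ℕ := Finsupp.equivFunOnFinite.symm (fun _ : Fin κ => n) with hm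
  have hmj : ∀ j, m j = n := fun j => rfl
  refine Finset.sum_nbij' (fun A => Aᶜ) (fun B => Bᶜ) ?_ ?_ ?_ ?_ ?_
  · intro A hA
    rw [Finset.mem_powersetCard_univ] at hA ⊢
    rw [Finset.card_compl, Fintype.card_fin]
    omega
  · intro B hB
    rw [Finset.mem_powersetCard_univ] at hB ⊢
    rw [Finset.card_compl, Fintype.card_fin]
    omega
  · intro A _; exact compl_compl A
  · intro B _; exact compl_compl B
  · intro A hA
    rw [Finset.mem_powersetCard_univ] at hA
    -- the exponent finsupp of the monomial
    have hsA : ∀ j, (∑ i ∈ A, Finsupp.single i (1 : ℕ)) j = if j ∈ A then 1 else 0 := by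
      intro j
      rw [Finset.sum_apply']
      simp [Finsupp.single_apply]
    have hle : (∑ i ∈ A, Finsupp.single i (1 : ℕ)) ≤ m := by
      rw [Finsupp.le_def]
      intro j
      rw [hsA, hmj]
      split_ifs <;> omega
    rw [coeff_mul_monomial', if_pos hle, mul_one, coeff_C_mul, coeff_linpow]
    have hsub : ∀ j, (m - ∑ i ∈ A, Finsupp.single i (1 : ℕ)) j
        = if j ∈ A then n - 1 else n := by
      intro j
      rw [Finsupp.tsub_apply, hsA, hmj]
      split_ifs <;> omega
    have hsum : (∑ j, (m - ∑ i ∈ A, Finsupp.single i (1 : ℕ)) j) = (n + κ * (n - 1) - p) := by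
      simp_rw [hsub]
      rw [← Finset.sum_add_sum_compl A]
      rw [Finset.sum_congr rfl (fun j hj => if_pos hj),
        Finset.sum_congr (rfl : Aᶜ = Aᶜ) (fun j hj => if_neg (by simpa using hj))]
      rw [Finset.sum_const, Finset.sum_const, Finset.card_compl, Fintype.card_fin, hA,
        smul_eq_mul, smul_eq_mul]
      have h1 : κ - (κ - n + p) = n - p := by omega
      rw [h1]
      have hple : p ≤ n + κ * (n - 1) := hp.trans (Nat.le_add_right n _)
      zify [hp, hn, hnκ, hple, show n - p ≤ κ by omega]
      ring
    rw [if_pos hsum]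
    -- multinomial value
    have hmultspec := Nat.multinomial_spec (univ : Finset (Fin κ))
      ⇑(m - ∑ i ∈ A, Finsupp.single i (1 : ℕ))
    have hprodfact : (∏ j : Fin κ, ((m - ∑ i ∈ A, Finsupp.single i (1 : ℕ)) j).factorial)
        = (n - 1).factorial ^ (κ - n + p) * n.factorial ^ (n - p) := by
      simp only [hsub, apply_ite Nat.factorial]
      rw [← Finset.prod_mul_prod_compl A]
      rw [Finset.prod_congr rfl (fun j hj => if_pos hj),
        Finset.prod_congr (rfl : Aᶜ = Aᶜ) (fun j hj => if_neg (by simpa using hj))]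
      rw [Finset.prod_const, Finset.prod_const, Finset.card_compl, Fintype.card_fin, hA,
        show κ - (κ - n + p) = n - p from by omega]
    have hsum' : (∑ j : Fin κ, (m - ∑ i ∈ A, Finsupp.single i (1 : ℕ)) j) = (n + κ * (n - 1) - p) := hsum
    rw [hsum'] at hmultspec
    have hmult : ((Nat.multinomial univ ⇑(m - ∑ i ∈ A, Finsupp.single i (1 : ℕ))) : ℚ)
        = (((n + κ * (n - 1) - p)).factorial : ℚ) /
          (((n - 1).factorial : ℚ) ^ (κ - n + p) * (n.factorial : ℚ) ^ (n - p)) := by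
      rw [eq_div_iff (by positivity)]
      rw [hprodfact] at hmultspec
      have := congrArg (Nat.cast : ℕ → ℚ) hmultspec
      push_cast at this ⊢
      linarith [this]
    -- product of a-powers
    have hprodA : (∏ j : Fin κ, ((a j : ℚ)) ^ ((m - ∑ i ∈ A, Finsupp.single i (1 : ℕ)) j))
        = (∏ j ∈ A, (a j : ℚ)) ^ (n - 1) * (∏ j ∈ Aᶜ, (a j : ℚ)) ^ n := by
      simp only [hsub, pow_ite]
      rw [← Finset.prod_mul_prod_compl A]
      rw [Finset.prod_congr rfl (fun j hj => if_pos hj),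
        Finset.prod_congr (rfl : Aᶜ = Aᶜ) (fun j hj => if_neg (by simpa using hj))]
      rw [Finset.prod_pow, Finset.prod_pow]
    rw [hmult, hprodA]
    -- right side term
    have hcardc : Aᶜ.card = n - p := by rw [Finset.card_compl, Fintype.card_fin, hA]; omega
    have hrhsprod : (∏ i ∈ Aᶜ, (a i : ℚ) / (2 * n * μ))
        = (∏ i ∈ Aᶜ, (a i : ℚ)) / (2 * n * μ) ^ (n - p) := by
      rw [Finset.prod_div_distrib, Finset.prod_const, hcardc]
    rw [hrhsprod, hItildeN]
    have hPA : (∏ i : Fin κ, (a i : ℚ)) = (∏ j ∈ A, (a j : ℚ)) * ∏ j ∈ Aᶜ, (a j : ℚ) :=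
      (Finset.prod_mul_prod_compl A _).symm
    rw [hPA]
    -- now a pure scalar identity
    obtain ⟨e, rfl⟩ : ∃ e, n = e + 1 := ⟨n - 1, by omega⟩
    obtain ⟨q, hq⟩ : ∃ q, e + 1 = p + q := ⟨e + 1 - p, by omega⟩
    have hqe : e + 1 - p = q := by omega
    have hKq : κ - (e + 1) + p = κ - q := by omega
    have hκq : q ≤ κ := by omega
    simp only [Nat.add_sub_cancel] at *
    rw [hqe, hKq]
    have hsplitF : ((e.factorial : ℚ)) ^ κ = (e.factorial : ℚ) ^ (κ - q) * (e.factorial : ℚ) ^ q := by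
      rw [← pow_add]; congr 1; omega
    have hfacts : ((e + 1).factorial : ℚ) = (e + 1) * e.factorial := by
      rw [Nat.factorial_succ]; push_cast; ring
    have h2M : ((2 : ℚ) * μ) ^ (e + 1) = (2 * μ) ^ p * (2 * μ) ^ q := by
      rw [← pow_add, ← hq]
    have h2nμ : ((2 : ℚ) * (e + 1) * μ) ^ q = (2 * μ) ^ q * ((e : ℚ) + 1) ^ q := by
      rw [← mul_pow]; congr 1; push_cast; ring
    have hPBn : (∏ j ∈ Aᶜ, (a j : ℚ)) ^ (e + 1) = (∏ j ∈ Aᶜ, (a j : ℚ)) ^ e * ∏ j ∈ Aᶜ, (a j : ℚ) :=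
      pow_succ _ _
    rw [hsplitF, hfacts, mul_pow ((e : ℚ) + 1) (e.factorial : ℚ) q, h2M, hPBn]
    push_cast at h2nμ ⊢
    rw [h2nμ]
    have he1 : ((e : ℚ) + 1) ≠ 0 := by positivity
    have h2Mq : ((2 : ℚ) * μ) ^ q ≠ 0 := by positivity
    have hF : (e.factorial : ℚ) ≠ 0 := Nat.cast_ne_zero.mpr (Nat.factorial_ne_zero _)
    field_simp
    ring
end

section
/- With Ĩ_p = Ĩ_n · s_{n-p}(a_1/(2nμ),...,a_κ/(2nμ)), the Fujiwara bound λ̃ = 2 max_{1≤p≤n} (Ĩ_p/Ĩ_0)^{1/p} equals 4nμ · s_{n-1}(a_1,...,a_κ)/s_n(a_1,...,a_κ). -/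
open Finset

namespace FujiwaraAux

/-- cons formula for multiset esymm -/
lemma esymm_cons (a : ℝ) (s : Multiset ℝ) (k : ℕ) :
    (a ::ₘ s).esymm (k + 1) = s.esymm (k + 1) + a * s.esymm k := by
  simp [Multiset.esymm, Multiset.powersetCard_cons, Multiset.map_map, Function.comp,
    Multiset.sum_map_mul_left]

lemma esymm_zero' (s : Multiset ℝ) : s.esymm 0 = 1 := by
  simp [Multiset.esymm]

lemma esymm_nil (k : ℕ) : (0 : Multiset ℝ).esymm (k + 1) = 0 := by
  simp [Multiset.esymm, Multiset.powersetCard_zero_right]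

lemma esymm_cons_one (a : ℝ) (s : Multiset ℝ) :
    (a ::ₘ s).esymm 1 = s.esymm 1 + a := by
  have := esymm_cons a s 0
  simpa [esymm_zero'] using this

lemma esymm_nonneg {s : Multiset ℝ} (h : ∀ x ∈ s, 0 ≤ x) (k : ℕ) : 0 ≤ s.esymm k := by
  refine Multiset.sum_nonneg ?_
  intro x hx
  obtain ⟨t, ht, rfl⟩ := Multiset.mem_map.1 hx
  exact Multiset.prod_nonneg fun y hy =>
    h y (Multiset.mem_of_le (Multiset.mem_powersetCard.1 ht).1 hy)

lemma esymm_succ_le {s : Multiset ℝ} (h : ∀ x ∈ s, 0 ≤ x) (k : ℕ) :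
    s.esymm (k + 1) ≤ s.esymm 1 * s.esymm k := by
  induction s using Multiset.induction_on generalizing k with
  | empty => simp [esymm_nil]
  | cons a s ih =>
    have ha : 0 ≤ a := h a (Multiset.mem_cons_self a s)
    have hs : ∀ x ∈ s, 0 ≤ x := fun x hx => h x (Multiset.mem_cons_of_mem hx)
    cases k with
    | zero => simp [esymm_zero']
    | succ m =>
      have h1 : s.esymm (m + 2) ≤ s.esymm 1 * s.esymm (m + 1) := ih hs (m + 1)
      have h2 : 0 ≤ s.esymm 1 * s.esymm m :=
        mul_nonneg (esymm_nonneg hs 1) (esymm_nonneg hs m)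
      have h3 : 0 ≤ s.esymm m := esymm_nonneg hs m
      rw [esymm_cons, esymm_cons, esymm_cons, esymm_zero',
        show (0:ℕ) + 1 = 1 from rfl, show m + 1 + 1 = m + 2 from rfl]
      nlinarith [mul_nonneg ha (mul_nonneg (esymm_nonneg hs 1) h3),
        mul_nonneg (mul_nonneg ha ha) h3]

lemma esymm_zero_propagate {s : Multiset ℝ} (h : ∀ x ∈ s, 0 ≤ x) (k : ℕ)
    (hk : s.esymm k = 0) : s.esymm (k + 1) = 0 := by
  have h1 := esymm_succ_le h k
  rw [hk, mul_zero] at h1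
  exact le_antisymm h1 (esymm_nonneg h (k + 1))

/-- Newton-type log-concavity of elementary symmetric functions -/
lemma esymm_log_concave {s : Multiset ℝ} (h : ∀ x ∈ s, 0 ≤ x) (k : ℕ) :
    s.esymm k * s.esymm (k + 2) ≤ s.esymm (k + 1) ^ 2 := by
  induction s using Multiset.induction_on generalizing k with
  | empty =>
    rw [esymm_nil]
    simp [sq_nonneg]
  | cons a s ih =>
    have ha : 0 ≤ a := h a (Multiset.mem_cons_self a s)
    have hs : ∀ x ∈ s, 0 ≤ x := fun x hx => h x (Multiset.mem_cons_of_mem hx)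
    cases k with
    | zero =>
      rw [esymm_zero', esymm_cons, esymm_cons, esymm_zero', one_mul]
      have h1 := ih hs 0
      rw [esymm_zero', one_mul] at h1
      nlinarith [esymm_nonneg hs 1, esymm_nonneg hs 0]
    | succ m =>
      have A := ih hs m
      have B : s.esymm (m + 1) * s.esymm (m + 3) ≤ s.esymm (m + 2) ^ 2 := ih hs (m + 1)
      have hm := esymm_nonneg hs m
      have hm1 := esymm_nonneg hs (m + 1)
      have hm2 := esymm_nonneg hs (m + 2)
      have hm3 := esymm_nonneg hs (m + 3)
      -- cross inequality: E m * E (m+3) ≤ E (m+1) * E (m+2)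
      have C : s.esymm m * s.esymm (m + 3) ≤ s.esymm (m + 1) * s.esymm (m + 2) := by
        rcases eq_or_lt_of_le hm2 with h2 | h2
        · have h3 : s.esymm (m + 3) = 0 := esymm_zero_propagate hs (m + 2) h2.symm
          rw [h3, mul_zero]
          exact mul_nonneg hm1 hm2
        · have h1 : 0 < s.esymm (m + 1) := by
            rcases eq_or_lt_of_le hm1 with h1 | h1
            · exfalso
              have := esymm_zero_propagate hs (m + 1) h1.symm
              rw [this] at h2; exact lt_irrefl 0 h2
            · exact h1
          have hprod : (s.esymm m * s.esymm (m + 3)) * (s.esymm (m + 1) * s.esymm (m + 2)) ≤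
              (s.esymm (m + 1) * s.esymm (m + 2)) * (s.esymm (m + 1) * s.esymm (m + 2)) := by
            have := mul_le_mul A B (mul_nonneg hm1 hm3) (sq_nonneg _)
            nlinarith
          exact le_of_mul_le_mul_right (by nlinarith) (mul_pos h1 h2)
      rw [esymm_cons a s (m + 1), esymm_cons a s (m + 2), esymm_cons a s m,
        show m + 1 + 1 = m + 2 from rfl, show m + 2 + 1 = m + 3 from rfl]
      nlinarith [mul_le_mul_of_nonneg_left C ha, mul_le_mul_of_nonneg_left A (mul_nonneg ha ha),
        mul_nonneg ha hm, mul_nonneg (mul_nonneg ha ha) hm]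

/-- cross inequality for general gaps: `E j * E (k+1) ≤ E (j+1) * E k` for `j ≤ k`. -/
lemma esymm_cross {s : Multiset ℝ} (h : ∀ x ∈ s, 0 ≤ x) {j k : ℕ} (hjk : j ≤ k) :
    s.esymm j * s.esymm (k + 1) ≤ s.esymm (j + 1) * s.esymm k := by
  induction k, hjk using Nat.le_induction with
  | base => rw [mul_comm]
  | succ k hk ih =>
    have hj := esymm_nonneg h j
    have hj1 := esymm_nonneg h (j + 1)
    have hk0 := esymm_nonneg h k
    have hk1 := esymm_nonneg h (k + 1)
    have hk2 := esymm_nonneg h (k + 2)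
    have LC := esymm_log_concave h k
    rcases eq_or_lt_of_le hk1 with h1 | h1
    · have h2 : s.esymm (k + 2) = 0 := esymm_zero_propagate h (k + 1) h1.symm
      rw [h2, mul_zero]
      exact mul_nonneg hj1 hk1
    · have hkpos : 0 < s.esymm k := by
        rcases eq_or_lt_of_le hk0 with h0 | h0
        · exfalso
          have := esymm_zero_propagate h k h0.symm
          rw [this] at h1; exact lt_irrefl 0 h1
        · exact h0
      have hprod : (s.esymm j * s.esymm (k + 2)) * (s.esymm k * s.esymm (k + 1)) ≤
          (s.esymm (j + 1) * s.esymm (k + 1)) * (s.esymm k * s.esymm (k + 1)) := by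
        have := mul_le_mul ih LC (mul_nonneg hk0 hk2) (mul_nonneg hj1 hk0)
        nlinarith
      exact le_of_mul_le_mul_right hprod (mul_pos hkpos h1)

/-- the chain inequality `E m * E (m+q+1)^q ≤ E (m+q)^(q+1)` for nonneg elements. -/
lemma esymm_chain {s : Multiset ℝ} (h : ∀ x ∈ s, 0 ≤ x) (m q : ℕ) :
    s.esymm m * s.esymm (m + q + 1) ^ q ≤ s.esymm (m + q) ^ (q + 1) := by
  induction q generalizing m with
  | zero => simp
  | succ q ih =>
    have ih' : s.esymm (m + 1) * s.esymm (m + q + 2) ^ q ≤ s.esymm (m + q + 1) ^ (q + 1) := by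
      have := ih (m + 1)
      rw [show m + 1 + q + 1 = m + q + 2 from by omega, show m + 1 + q = m + q + 1 from by omega]
        at this
      exact this
    have cross : s.esymm m * s.esymm (m + q + 2) ≤ s.esymm (m + 1) * s.esymm (m + q + 1) := by
      have := esymm_cross h (show m ≤ m + q + 1 from by omega)
      rwa [show m + q + 1 + 1 = m + q + 2 from by omega] at this
    have hq2 : (0:ℝ) ≤ s.esymm (m + q + 2) ^ q := pow_nonneg (esymm_nonneg h _) q
    have hq1 : (0:ℝ) ≤ s.esymm (m + q + 1) := esymm_nonneg h _
    rw [show m + (q + 1) + 1 = m + q + 2 from by omega, show m + (q + 1) = m + q + 1 from by omega]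
    calc s.esymm m * s.esymm (m + q + 2) ^ (q + 1)
        = (s.esymm m * s.esymm (m + q + 2)) * s.esymm (m + q + 2) ^ q := by ring
      _ ≤ (s.esymm (m + 1) * s.esymm (m + q + 1)) * s.esymm (m + q + 2) ^ q :=
          mul_le_mul_of_nonneg_right cross hq2
      _ = s.esymm (m + q + 1) * (s.esymm (m + 1) * s.esymm (m + q + 2) ^ q) := by ring
      _ ≤ s.esymm (m + q + 1) * s.esymm (m + q + 1) ^ (q + 1) :=
          mul_le_mul_of_nonneg_left ih' hq1
      _ = s.esymm (m + q + 1) ^ (q + 1 + 1) := by ring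

end FujiwaraAux

open FujiwaraAux in
/-- positivity of esymmEval for positive inputs -/
lemma esymmEval_pos (κ : ℕ) (a : Fin κ → ℝ) (ha : ∀ i, 0 < a i) {j : ℕ} (hj : j ≤ κ) :
    0 < esymmEval κ a j := by
  unfold esymmEval
  obtain ⟨A, hA, hcard⟩ := Finset.exists_subset_card_eq (s := (Finset.univ : Finset (Fin κ))) (n := j)
    (by simpa using hj)
  refine Finset.sum_pos (fun B _ => Finset.prod_pos fun i _ => ha i)
    ⟨A, Finset.mem_powersetCard.2 ⟨hA, hcard⟩⟩

/-- scaling of esymmEval -/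
lemma esymmEval_div (κ : ℕ) (x : Fin κ → ℝ) (c : ℝ) (j : ℕ) :
    esymmEval κ (fun i => x i / c) j = esymmEval κ x j / c ^ j := by
  unfold esymmEval
  rw [Finset.sum_div]
  refine Finset.sum_congr rfl fun A hA => ?_
  rw [Finset.prod_div_distrib, Finset.prod_const,
    (Finset.mem_powersetCard.1 hA).2]

lemma esymmEval_eq_multiset (κ : ℕ) (x : Fin κ → ℝ) (j : ℕ) :
    esymmEval κ x j = ((Finset.univ : Finset (Fin κ)).val.map x).esymm j :=
  (Finset.esymm_map_val x Finset.univ j).symm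

/-- With `Ĩ_p = Ĩ_n · s_{n-p}(a_1/(2nμ), ..., a_κ/(2nμ))`, the Fujiwara bound
`λ̃ = 2 max_{1 ≤ p ≤ n} (Ĩ_p/Ĩ_0)^(1/p)` equals `4nμ · s_{n-1}(a)/s_n(a)`. -/
theorem fujiwara_bound_value (κ n : ℕ) (hn : 1 ≤ n) (hnκ : n ≤ κ)
    (a : Fin κ → ℝ) (ha : ∀ i, 0 < a i)
    (μ : ℝ) (hμ : μ = ∑ i : Fin κ, (i.1 + 1 : ℝ) * a i)
    (ItildeN : ℝ) (hIN : 0 < ItildeN)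
    (Itilde : ℕ → ℝ)
    (hItilde : ∀ p, Itilde p =
      ItildeN * esymmEval κ (fun i => a i / (2 * n * μ)) (n - p)) :
    2 * (Finset.Icc 1 n).sup' (Finset.nonempty_Icc.mpr hn)
        (fun p => (Itilde p / Itilde 0) ^ ((p : ℝ)⁻¹)) =
      4 * n * μ * (esymmEval κ a (n - 1) / esymmEval κ a n) := by
  have hκpos : 0 < κ := lt_of_lt_of_le hn hnκ
  have : Nonempty (Fin κ) := ⟨⟨0, hκpos⟩⟩
  have hμ0 : 0 < μ := by
    rw [hμ]
    exact Finset.sum_pos (fun i _ => mul_pos (by positivity) (ha i)) Finset.univ_nonempty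
  have hn0 : (0:ℝ) < n := by exact_mod_cast hn
  set c : ℝ := 2 * n * μ with hc
  have hcpos : 0 < c := by positivity
  have hS : ∀ j, j ≤ κ → 0 < esymmEval κ a j := fun j hj => esymmEval_pos κ a ha hj
  have hSn : 0 < esymmEval κ a n := hS n hnκ
  have hSn1 : 0 < esymmEval κ a (n - 1) := hS (n - 1) (le_trans (Nat.sub_le n 1) hnκ)
  -- the ratio computation
  have hratio : ∀ p, Itilde p / Itilde 0 =
      c ^ p * (esymmEval κ a (n - p) / esymmEval κ a n) ∨ n < p := by
    intro p
    by_cases hpn : p ≤ n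
    · left
      rw [hItilde p, hItilde 0, esymmEval_div, esymmEval_div, Nat.sub_zero]
      have hpow : c ^ n = c ^ (n - p) * c ^ p := by
        rw [← pow_add]
        congr 1
        omega
      have h1 : (0:ℝ) < c ^ (n - p) := pow_pos hcpos _
      have h2 : (0:ℝ) < c ^ n := pow_pos hcpos _
      field_simp
      rw [hpow]
      ring
    · right; omega
  -- nonnegativity set-up for the multiset chain lemma
  set M : Multiset ℝ := (Finset.univ : Finset (Fin κ)).val.map a with hM
  have hMn : ∀ x ∈ M, (0:ℝ) ≤ x := by
    intro x hx
    obtain ⟨i, _, rfl⟩ := Multiset.mem_map.1 hx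
    exact (ha i).le
  -- the key pointwise bound: each term is at most the value at p = 1
  set f : ℕ → ℝ := fun p => (Itilde p / Itilde 0) ^ ((p : ℝ)⁻¹) with hf
  have hf1 : f 1 = c * (esymmEval κ a (n - 1) / esymmEval κ a n) := by
    rcases hratio 1 with h | h
    · simp only [hf, h, pow_one, Nat.cast_one, inv_one, Real.rpow_one]
    · omega
  have hle : ∀ p ∈ Finset.Icc 1 n, f p ≤ f 1 := by
    intro p hp
    obtain ⟨hp1, hpn⟩ := Finset.mem_Icc.1 hp
    rcases hratio p with h | h
    · rw [hf1]
      simp only [hf, h]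
      have hp0 : (p:ℝ) ≠ 0 := by positivity
      set r1 : ℝ := esymmEval κ a (n - 1) / esymmEval κ a n with hr1
      set rp : ℝ := esymmEval κ a (n - p) / esymmEval κ a n with hrp
      have hr1pos : 0 < r1 := div_pos hSn1 hSn
      have hrppos : 0 < rp := div_pos (hS (n - p) (by omega)) hSn
      have key : rp ≤ r1 ^ p := by
        rw [hrp, hr1, div_pow, div_le_div_iff₀ hSn (pow_pos hSn p)]
        have chain : esymmEval κ a (n - p) * esymmEval κ a n ^ (p - 1) ≤
            esymmEval κ a (n - 1) ^ p := by
          have h0 := FujiwaraAux.esymm_chain hMn (n - p) (p - 1)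
          rw [show n - p + (p - 1) + 1 = n from by omega,
            show n - p + (p - 1) = n - 1 from by omega,
            show p - 1 + 1 = p from by omega] at h0
          rw [esymmEval_eq_multiset κ a (n - p), esymmEval_eq_multiset κ a n,
            esymmEval_eq_multiset κ a (n - 1)]
          exact h0
        have hsplit : esymmEval κ a n ^ p = esymmEval κ a n ^ (p - 1) * esymmEval κ a n := by
          rw [← pow_succ]
          congr 1
          omega
        calc esymmEval κ a (n - p) * esymmEval κ a n ^ p
            = (esymmEval κ a (n - p) * esymmEval κ a n ^ (p - 1)) * esymmEval κ a n := by
              rw [hsplit]; ring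
          _ ≤ esymmEval κ a (n - 1) ^ p * esymmEval κ a n :=
              mul_le_mul_of_nonneg_right chain hSn.le
      calc (c ^ p * rp) ^ ((p:ℝ)⁻¹)
          ≤ (c ^ p * r1 ^ p) ^ ((p:ℝ)⁻¹) := by
            apply Real.rpow_le_rpow (by positivity)
              (mul_le_mul_of_nonneg_left key (pow_nonneg hcpos.le p)) (by positivity)
        _ = c * r1 := by
            rw [← mul_pow, ← Real.rpow_natCast (c * r1) p, ← Real.rpow_mul (by positivity),
              mul_inv_cancel₀ hp0, Real.rpow_one]
    · omega
  have h1mem : 1 ∈ Finset.Icc 1 n := Finset.mem_Icc.2 ⟨le_refl 1, hn⟩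
  have hsup : (Finset.Icc 1 n).sup' (Finset.nonempty_Icc.mpr hn) f = f 1 :=
    le_antisymm (Finset.sup'_le _ _ hle) (Finset.le_sup' f h1mem)
  rw [hsup, hf1, hc]
  ring
end

section
/- For κ = n and the geometric choice a_i = n^{n-i} (i = 1,...,n), the quantity λ̃ = 4nμ · s_{n-1}(a)/s_n(a), where μ = Σ_{i=1}^n i·a_i, satisfies 4 ≤ λ̃ / n^n ≤ 4 (n/(n-1))^3, for n ≥ 2. -/
open Finset

lemma wgeom (x : ℝ) (n : ℕ) :
    (1 - x)^2 * ∑ i ∈ range n, (i+1 : ℝ) * x^(i+1)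
      = x - (n+1 : ℝ) * x^(n+1) + (n : ℝ) * x^(n+2) := by
  induction n with
  | zero => simp
  | succ m ih =>
    rw [sum_range_succ, mul_add, ih]
    push_cast
    ring

lemma wgeom_le (x : ℝ) (hx : 0 ≤ x) (hx1 : x < 1) (n : ℕ) :
    ∑ i ∈ range n, (i+1 : ℝ) * x^(i+1) ≤ x / (1-x)^2 := by
  have hne : (0:ℝ) < 1 - x := by linarith
  have h1 : (0:ℝ) < (1-x)^2 := by positivity
  rw [le_div_iff₀ h1, mul_comm, wgeom, pow_succ x (n+1)]
  have h2 : (0:ℝ) ≤ x^(n+1) := by positivity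
  have h3 : x^(n+1) * x ≤ x^(n+1) := mul_le_of_le_one_right h2 hx1.le
  nlinarith [mul_le_mul_of_nonneg_left h3 (Nat.cast_nonneg (α := ℝ) n)]

lemma geom_le' (x : ℝ) (hx : 0 ≤ x) (hx1 : x < 1) (n : ℕ) :
    ∑ i ∈ range n, x^i ≤ 1 / (1-x) := by
  have h1 : (0:ℝ) < 1 - x := by linarith
  rw [le_div_iff₀ h1]
  have := geom_sum_mul x n
  have h2 : (0:ℝ) ≤ x^n := by positivity
  nlinarith

lemma esymm_top (n : ℕ) (a : Fin n → ℝ) : esymmEval n a n = ∏ i, a i := by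
  unfold esymmEval
  have h := powersetCard_self (Finset.univ : Finset (Fin n))
  rw [card_univ, Fintype.card_fin] at h
  rw [h, sum_singleton]

lemma esymm_pred (n : ℕ) (hn : 1 ≤ n) (a : Fin n → ℝ) :
    esymmEval n a (n-1) = ∑ j : Fin n, ∏ i ∈ Finset.univ.erase j, a i := by
  unfold esymmEval
  refine (Finset.sum_bij (fun (j : Fin n) _ => Finset.univ.erase j) ?_ ?_ ?_ ?_).symm
  · intro j _
    show Finset.univ.erase j ∈ _
    rw [mem_powersetCard]
    refine ⟨erase_subset _ _, ?_⟩
    rw [← compl_singleton, card_compl]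
    simp
  · intro j _ k _ h
    by_contra hne
    have : j ∈ Finset.univ.erase k := by simp [hne]
    rw [← h] at this
    simp at this
  · intro A hA
    rw [mem_powersetCard] at hA
    have hc : Aᶜ.card = 1 := by
      rw [card_compl, hA.2]
      simp
      omega
    obtain ⟨j, hj⟩ := card_eq_one.mp hc
    refine ⟨j, mem_univ j, ?_⟩
    show Finset.univ.erase j = A
    rw [← compl_singleton, ← hj, compl_compl]
  · intro j _
    rfl

/-- For `κ = n` and the geometric choice `a_i = n^{n-i}`, the quantity
`λ̃ = 4nμ s_{n-1}(a)/s_n(a)` satisfies `4 ≤ λ̃/n^n ≤ 4 (n/(n-1))^3` for `n ≥ 2`. -/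
theorem lambda_tilde_bounds (n : ℕ) (hn : 2 ≤ n)
    (a : Fin n → ℝ) (ha : ∀ i : Fin n, a i = (n : ℝ) ^ (n - 1 - i.1))
    (μ : ℝ) (hμ : μ = ∑ i : Fin n, (i.1 + 1 : ℝ) * a i)
    (lam : ℝ)
    (hlam : lam = 4 * n * μ * (esymmEval n a (n - 1) / esymmEval n a n)) :
    4 ≤ lam / (n : ℝ) ^ n ∧ lam / (n : ℝ) ^ n ≤ 4 * ((n : ℝ) / (n - 1)) ^ 3 := by
  set N : ℝ := (n : ℝ) with hNdef
  have hN : (2:ℝ) ≤ N := by rw [hNdef]; exact_mod_cast hn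
  have hN0 : (0:ℝ) < N := by linarith
  have hN1 : (0:ℝ) < N - 1 := by linarith
  have hapos : ∀ i : Fin n, 0 < a i := by
    intro i; rw [ha i]; positivity
  have hP : (0:ℝ) < ∏ i, a i := Finset.prod_pos (fun i _ => hapos i)
  -- ratio of esymm
  have hratio : esymmEval n a (n - 1) / esymmEval n a n = ∑ j : Fin n, (a j)⁻¹ := by
    rw [esymm_pred n (by omega) a, esymm_top, sum_div]
    refine Finset.sum_congr rfl (fun j _ => ?_)
    have h1 : a j * ∏ i ∈ Finset.univ.erase j, a i = ∏ i, a i :=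
      Finset.mul_prod_erase _ _ (mem_univ j)
    have haj : a j ≠ 0 := (hapos j).ne'
    field_simp
    linarith [h1]
  set S : ℝ := ∑ j : Fin n, (a j)⁻¹ with hSdef
  -- rewrite S as a geometric sum
  have hS_eq : S = ∑ i ∈ range n, (N⁻¹)^i := by
    rw [hSdef]
    have h1 : ∀ j : Fin n, (a j)⁻¹ = ((fun m => (N^m)⁻¹) (n - 1 - j.1)) := by
      intro j; rw [ha j]
    simp only [h1]
    rw [Fin.sum_univ_eq_sum_range (fun i => (fun m => (N^m)⁻¹) (n - 1 - i)) n]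
    rw [Finset.sum_range_reflect (fun m => (N^m)⁻¹) n]
    exact Finset.sum_congr rfl (fun i _ => by rw [inv_pow])
  have hxnn : (0:ℝ) ≤ N⁻¹ := by positivity
  have hx1 : N⁻¹ < 1 := by
    rw [inv_lt_one_iff₀]; right; linarith
  have hS1 : (1:ℝ) ≤ S := by
    rw [hS_eq]
    have := Finset.single_le_sum (f := fun i => (N⁻¹)^i)
      (fun i _ => by positivity) (Finset.mem_range.mpr (show 0 < n by omega))
    simpa using this
  have hS2 : S ≤ N / (N - 1) := by
    rw [hS_eq]
    have h := geom_le' N⁻¹ hxnn hx1 n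
    have heq : 1 / (1 - N⁻¹) = N / (N - 1) := by
      rw [show (1 - N⁻¹) = (N-1)/N by field_simp, one_div_div]
    rw [heq] at h
    exact h
  -- μ as a range sum
  have hμ_eq : μ = ∑ i ∈ range n, (i + 1 : ℝ) * N ^ (n - 1 - i) := by
    rw [hμ]
    have h1 : ∀ j : Fin n, (j.1 + 1 : ℝ) * a j
        = ((fun (i : ℕ) => ((i : ℝ) + 1) * N ^ (n - 1 - i)) j.1) := by
      intro j; rw [ha j]
    simp only [h1]
    exact Fin.sum_univ_eq_sum_range (fun (i : ℕ) => ((i : ℝ) + 1) * N ^ (n - 1 - i)) n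
  have hμlow : N ^ (n-1) ≤ μ := by
    rw [hμ_eq]
    have := Finset.single_le_sum (f := fun (i : ℕ) => ((i : ℝ) + 1) * N ^ (n - 1 - i))
      (fun i _ => by positivity) (Finset.mem_range.mpr (show 0 < n by omega))
    simpa using this
  have hμup : μ ≤ N ^ n * N / (N - 1)^2 := by
    have hterm : ∀ i ∈ range n, (i + 1 : ℝ) * N ^ (n - 1 - i)
        = N ^ n * ((i + 1 : ℝ) * (N⁻¹) ^ (i+1)) := by
      intro i hi
      rw [Finset.mem_range] at hi
      have hexp : n = (n - 1 - i) + (i + 1) := by omega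
      rw [inv_pow]
      rw [show N ^ n = N ^ (n - 1 - i) * N ^ (i+1) by rw [← pow_add, ← hexp]]
      field_simp
    rw [hμ_eq, Finset.sum_congr rfl hterm, ← Finset.mul_sum]
    have h := wgeom_le N⁻¹ hxnn hx1 n
    have heq : N⁻¹ / (1 - N⁻¹)^2 = N / (N-1)^2 := by
      rw [show (1 - N⁻¹) = (N-1)/N by field_simp]
      field_simp
    rw [heq] at h
    have hNn : (0:ℝ) ≤ N ^ n := by positivity
    calc N ^ n * ∑ i ∈ range n, (i + 1 : ℝ) * (N⁻¹) ^ (i+1)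
        ≤ N ^ n * (N / (N-1)^2) := by
          exact mul_le_mul_of_nonneg_left h hNn
      _ = N ^ n * N / (N-1)^2 := by ring
  have hμ0 : (0:ℝ) < μ := lt_of_lt_of_le (by positivity) hμlow
  have hPn : (0:ℝ) < N ^ n := by positivity
  rw [hlam, hratio]
  constructor
  · rw [le_div_iff₀ hPn]
    have hpow : N ^ n = N * N ^ (n-1) := by
      rw [← pow_succ']
      congr 1
      omega
    have h1 : N ^ (n-1) * 1 ≤ μ * S :=
      mul_le_mul hμlow hS1 zero_le_one hμ0.le
    rw [hpow]
    nlinarith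
  · rw [div_le_iff₀ hPn]
    have h1 : μ * S ≤ (N ^ n * N / (N - 1)^2) * (N / (N-1)) :=
      mul_le_mul hμup hS2 (by linarith) (by positivity)
    have h2 : 4 * N * (μ * S) ≤ 4 * N * ((N ^ n * N / (N - 1)^2) * (N / (N-1))) := by
      have : (0:ℝ) ≤ 4 * N := by linarith
      exact mul_le_mul_of_nonneg_left h1 this
    have h3 : 4 * N * ((N ^ n * N / (N - 1)^2) * (N / (N-1)))
        = 4 * (N / (N - 1)) ^ 3 * N ^ n := by
      field_simp
    calc 4 * N * μ * (S) = 4 * N * (μ * S) := by ring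
      _ ≤ 4 * (N / (N - 1)) ^ 3 * N ^ n := by rw [← h3]; exact h2
end

section
/- For n ≥ 6 and a_i = n^{n-i} (i=1,...,n), the product Ĉ := Π_{k=1}^{n-1} ((n^k - 1)^{n-k}) / ((n^k - 2)(n^k - (2 + 1/n))^{n-1-k}) satisfies Ĉ ≤ 5. -/
open Finset

/-- Weierstrass product inequality. -/
lemma aux_prod_one_sub (s : Finset ℕ) (t : ℕ → ℝ) (h0 : ∀ i ∈ s, 0 ≤ t i)
    (h1 : ∀ i ∈ s, t i ≤ 1) :
    1 - ∑ i ∈ s, t i ≤ ∏ i ∈ s, (1 - t i) := by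
  classical
  induction s using Finset.induction_on with
  | empty => simp
  | insert a s hx ih =>
    rw [Finset.sum_insert hx, Finset.prod_insert hx]
    have ha0 : 0 ≤ t a := h0 a (by simp)
    have ha1 : t a ≤ 1 := h1 a (by simp)
    have ih' : 1 - ∑ i ∈ s, t i ≤ ∏ i ∈ s, (1 - t i) :=
      ih (fun i hi => h0 i (by simp [hi])) (fun i hi => h1 i (by simp [hi]))
    have hs0 : 0 ≤ ∑ i ∈ s, t i := Finset.sum_nonneg (fun i hi => h0 i (by simp [hi]))
    nlinarith [mul_le_mul_of_nonneg_left ih' (by linarith : (0:ℝ) ≤ 1 - t a)]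

/-- geometric tail bound -/
lemma aux_geom (r : ℝ) (h0 : 0 ≤ r) (h1 : r < 1) (m : ℕ) :
    ∑ k ∈ Finset.Icc 2 m, r ^ (k - 1) ≤ r / (1 - r) := by
  have hr : 0 < 1 - r := by linarith
  have key : ∀ m : ℕ, 1 ≤ m →
      (1 - r) * (∑ k ∈ Finset.Icc 2 m, r ^ (k - 1)) + r ^ m ≤ r := by
    intro m hm
    induction m with
    | zero => omega
    | succ p ih =>
      rcases Nat.lt_or_ge p 1 with hp | hp
      · interval_cases p
        simp [show Finset.Icc 2 1 = ∅ from rfl]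
      · have hstep : Finset.Icc 2 (p + 1) = insert (p + 1) (Finset.Icc 2 p) := by
          ext x; simp only [Finset.mem_Icc, Finset.mem_insert]; omega
        rw [hstep, Finset.sum_insert (by simp)]
        have ihp := ih hp
        have hpow : r ^ (p + 1 - 1) = r ^ p := by congr 1
        rw [hpow]
        have hiden : (1 - r) * (r ^ p + ∑ k ∈ Finset.Icc 2 p, r ^ (k - 1)) + r ^ (p + 1)
            = (1 - r) * (∑ k ∈ Finset.Icc 2 p, r ^ (k - 1)) + r ^ p := by
          rw [pow_succ]; ring
        rw [hiden]
        exact ihp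
  rcases Nat.lt_or_ge m 2 with hm | hm
  · have : Finset.Icc 2 m = ∅ := by
      apply Finset.Icc_eq_empty; omega
    rw [this]; simp; positivity
  · have hkm := key m (by omega)
    have hpm : 0 ≤ r ^ m := pow_nonneg h0 m
    have h2 : (1 - r) * (∑ k ∈ Finset.Icc 2 m, r ^ (k - 1)) ≤ r := by linarith
    rw [le_div_iff₀ hr, mul_comm]
    exact h2

set_option maxHeartbeats 2000000 in
/-- For `n ≥ 6`, the product
`Ĉ = Π_{k=1}^{n-1} (n^k - 1)^{n-k} / ((n^k - 2)(n^k - (2 + 1/n))^{n-1-k})`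
satisfies `Ĉ ≤ 5`. -/
theorem Chat_le_five (n : ℕ) (hn : 6 ≤ n) :
    ∏ k ∈ Finset.Icc 1 (n - 1),
      ((n : ℝ) ^ k - 1) ^ (n - k) /
        (((n : ℝ) ^ k - 2) * ((n : ℝ) ^ k - (2 + 1 / n)) ^ (n - 1 - k)) ≤ 5 := by
  rcases eq_or_lt_of_le hn with h6 | h7
  · -- n = 6 : direct computation
    subst h6
    norm_num [show Finset.Icc 1 5 = {1,2,3,4,5} from rfl]
  · -- n ≥ 7
    have hn7 : 7 ≤ n := h7
    obtain ⟨N, hNdef⟩ : ∃ N : ℝ, ((n : ℕ) : ℝ) = N := ⟨_, rfl⟩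
    rw [hNdef]
    have hN : (7:ℝ) ≤ N := by rw [← hNdef]; exact_mod_cast hn7
    have hN0 : (0:ℝ) < N := by linarith
    have hinvN : 1 / N ≤ 1 / 7 := by
      apply one_div_le_one_div_of_le <;> linarith
    have hinvN0 : 0 < 1 / N := by positivity
    obtain ⟨d, hd⟩ : ∃ d : ℝ, (2 : ℝ) + 1 / N = d := ⟨_, rfl⟩
    rw [hd]
    have hd1 : (2:ℝ) < d := by rw [← hd]; linarith
    have hd2 : d ≤ 15 / 7 := by rw [← hd]; linarith
    obtain ⟨f, hf⟩ : ∃ f : ℕ → ℝ,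
        (fun k => (N ^ k - 1) ^ (n - k) / ((N ^ k - 2) * (N ^ k - d) ^ (n - 1 - k))) = f :=
      ⟨_, rfl⟩
    have hfk : ∀ k, f k = (N ^ k - 1) ^ (n - k) / ((N ^ k - 2) * (N ^ k - d) ^ (n - 1 - k)) :=
      fun k => by rw [← hf]
    rw [show (∏ k ∈ Finset.Icc 1 (n - 1),
        (N ^ k - 1) ^ (n - k) / ((N ^ k - 2) * (N ^ k - d) ^ (n - 1 - k)))
        = ∏ k ∈ Finset.Icc 1 (n - 1), f k from by rw [← hf]]
    have hsplit : Finset.Icc 1 (n - 1) = insert 1 (Finset.Icc 2 (n - 1)) := by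
      ext x; simp only [Finset.mem_Icc, Finset.mem_insert]; omega
    rw [hsplit, Finset.prod_insert (by simp)]
    -- positivity facts for k in range
    have hposk : ∀ k, 1 ≤ k → (0:ℝ) < N ^ k - d ∧ (0:ℝ) < N ^ k - 2 ∧ (0:ℝ) < N ^ k - 1 := by
      intro k hk
      have h1 : N ≤ N ^ k := by
        calc N = N ^ 1 := (pow_one N).symm
        _ ≤ N ^ k := pow_le_pow_right₀ (by linarith) hk
      refine ⟨by linarith, by linarith, by linarith⟩
    have hfnonneg : ∀ k, 1 ≤ k → 0 ≤ f k := by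
      intro k hk
      obtain ⟨h1, h2, h3⟩ := hposk k hk
      rw [hfk]
      apply div_nonneg (pow_nonneg (by linarith) _)
      exact le_of_lt (mul_pos h2 (pow_pos h1 _))
    -- Part 1 : the first factor
    have hf1 : f 1 ≤ 6 / 5 * (2.7182818286 * (17 / 14)) := by
      have hD : 0 < N - d := by
        have := (hposk 1 le_rfl).1
        rwa [pow_one] at this
      have hD2 : 0 < N - 2 := by linarith
      have hfeq : f 1 = (N - 1) / (N - 2) * ((N - 1) / (N - d)) ^ (n - 2) := by
        rw [hfk 1]
        simp only [pow_one]
        rw [show n - 1 - 1 = n - 2 from by omega, show n - 1 = (n - 2) + 1 from by omega,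
          pow_succ, div_pow, div_mul_div_comm, mul_comm ((N - 1) ^ (n - 2)) (N - 1)]
      rw [hfeq]
      have hA : (N - 1) / (N - 2) ≤ 6 / 5 := by
        rw [div_le_div_iff₀ hD2 (by norm_num)]; linarith
      obtain ⟨x, hx_def⟩ : ∃ x : ℝ, (1 + 1 / N) / (N - d) = x := ⟨_, rfl⟩
      have hx0 : 0 ≤ x := by
        rw [← hx_def]; positivity
      have hratio : (N - 1) / (N - d) = 1 + x := by
        rw [show N - 1 = (N - d) + (1 + 1 / N) from by rw [← hd]; ring, add_div,
          div_self hD.ne', hx_def]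
      have hcast : ((n - 2 : ℕ) : ℝ) = N - 2 := by
        rw [← hNdef]; push_cast [Nat.cast_sub (by omega : 2 ≤ n)]; ring
      have hpos2 : (0:ℝ) < N ^ 2 - 2 * N - 1 := by nlinarith
      have hkey : ((n - 2 : ℕ) : ℝ) * x ≤ 20 / 17 := by
        rw [hcast, ← hx_def]
        have hxval : (1 + 1 / N) / (N - d) = (N + 1) / (N ^ 2 - 2 * N - 1) := by
          rw [div_eq_div_iff hD.ne' hpos2.ne', ← hd]
          have hu : 1 / N * N = 1 := by field_simp
          linear_combination (N - 1) * hu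
        rw [hxval, mul_div_assoc', div_le_div_iff₀ hpos2 (by norm_num)]
        nlinarith [sq_nonneg (N - 7)]
      have hexp : (1 + x) ^ (n - 2) ≤ Real.exp (((n - 2 : ℕ) : ℝ) * x) := by
        calc (1 + x) ^ (n - 2) ≤ Real.exp x ^ (n - 2) := by
              apply pow_le_pow_left₀ (by linarith)
              linarith [Real.add_one_le_exp x]
        _ = Real.exp (((n - 2 : ℕ) : ℝ) * x) := by
              rw [← Real.exp_nat_mul]
      have hexpbound : Real.exp (((n - 2 : ℕ) : ℝ) * x) ≤ 2.7182818286 * (17 / 14) := by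
        calc Real.exp (((n - 2 : ℕ) : ℝ) * x) ≤ Real.exp (20 / 17) := Real.exp_le_exp.mpr hkey
        _ = Real.exp 1 * Real.exp (3 / 17) := by
              rw [← Real.exp_add]; norm_num
        _ ≤ 2.7182818286 * (17 / 14) := by
              apply mul_le_mul Real.exp_one_lt_d9.le _ (Real.exp_pos _).le (by norm_num)
              have h := Real.add_one_le_exp (-(3 / 17 : ℝ))
              rw [Real.exp_neg] at h
              have h2 : Real.exp (3 / 17) * (Real.exp (3 / 17))⁻¹ = 1 :=
                mul_inv_cancel₀ (ne_of_gt (Real.exp_pos _))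
              nlinarith [mul_le_mul_of_nonneg_left h (Real.exp_pos (3 / 17 : ℝ)).le,
                Real.exp_pos (3 / 17 : ℝ)]
      apply mul_le_mul hA _ (pow_nonneg (div_nonneg (by linarith) (by linarith)) _)
        (by norm_num)
      rw [hratio]
      exact hexp.trans hexpbound
    -- Part 2 : the tail
    obtain ⟨T, hT⟩ : ∃ T : ℕ → ℝ, ∀ k, T k = (28:ℝ) / 23 * (1 / N) ^ (k - 1) :=
      ⟨_, fun _ => rfl⟩
    have hT0 : ∀ k, 0 ≤ T k := fun k => by rw [hT]; positivity
    have hTsmall : ∀ k, 2 ≤ k → T k ≤ 4 / 23 := by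
      intro k hk
      have h1 : (1 / N) ^ (k - 1) ≤ (1 / N) ^ 1 := by
        apply pow_le_pow_of_le_one (by positivity) (by linarith) (by omega)
      rw [pow_one] at h1
      have h2 : (1 / N) ^ (k - 1) ≤ 1 / 7 := by linarith
      rw [hT]
      have h3 : (0:ℝ) ≤ (1 / N) ^ (k - 1) := by positivity
      nlinarith
    have hTsum : ∑ k ∈ Finset.Icc 2 (n - 1), T k ≤ 14 / 69 := by
      have hgeom := aux_geom (1 / N) (by positivity) (by rw [div_lt_one hN0]; linarith) (n - 1)
      have hrr : (1 / N) / (1 - 1 / N) ≤ 1 / 6 := by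
        rw [div_le_div_iff₀ (by linarith) (by norm_num)]
        linarith
      calc ∑ k ∈ Finset.Icc 2 (n - 1), T k
          = 28 / 23 * ∑ k ∈ Finset.Icc 2 (n - 1), (1 / N) ^ (k - 1) := by
            rw [Finset.mul_sum]
            exact Finset.sum_congr rfl (fun k _ => hT k)
      _ ≤ 28 / 23 * (1 / 6) := by
            apply mul_le_mul_of_nonneg_left _ (by norm_num)
            linarith
      _ ≤ 14 / 69 := by norm_num
    have htail_each : ∀ k ∈ Finset.Icc 2 (n - 1), f k ≤ (1 - T k)⁻¹ := by
      intro k hk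
      rw [Finset.mem_Icc] at hk
      obtain ⟨hk2, hkn⟩ := hk
      obtain ⟨a, ha_def⟩ : ∃ a : ℝ, N ^ k = a := ⟨_, rfl⟩
      have ha49 : (49:ℝ) ≤ a := by
        rw [← ha_def]
        calc (49:ℝ) ≤ N ^ 2 := by nlinarith
        _ ≤ N ^ k := pow_le_pow_right₀ (by linarith) hk2
      have had : 46 / 49 * a ≤ a - d := by linarith
      have had0 : (0:ℝ) < a - d := by linarith
      have ha2 : (0:ℝ) < a - 2 := by linarith
      have ha1 : (0:ℝ) < a - 1 := by linarith
      have hsplit2 : n - k = (n - 1 - k) + 1 := by omega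
      -- step i : f k ≤ ((a-1)/(a-d))^(n-k)
      have hstep1 : f k ≤ ((a - 1) / (a - d)) ^ (n - k) := by
        rw [hfk k, ha_def, div_pow]
        apply div_le_div_of_nonneg_left (pow_nonneg (by linarith) _) (pow_pos had0 _)
        calc (a - d) ^ (n - k) = (a - d) ^ (n - 1 - k) * (a - d) := by
              rw [hsplit2, pow_succ]
        _ ≤ (a - 2) * (a - d) ^ (n - 1 - k) := by
              rw [mul_comm]
              apply mul_le_mul_of_nonneg_right (by linarith) (pow_nonneg (by linarith) _)
      obtain ⟨x, hx_def⟩ : ∃ x : ℝ, (d - 1) / (a - d) = x := ⟨_, rfl⟩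
      have hx0 : 0 ≤ x := by
        rw [← hx_def]
        apply div_nonneg (by linarith) (by linarith)
      have hxsmall : x ≤ 28 / 23 / a := by
        rw [← hx_def, div_le_div_iff₀ had0 (by linarith)]
        nlinarith
      have hx1 : x < 1 / 2 := by
        have h5 : 28 / 23 / a ≤ 28 / 23 / 49 := by
          apply div_le_div_of_nonneg_left (by norm_num) (by norm_num) ha49
        nlinarith
      have hratio : (a - 1) / (a - d) = 1 + x := by
        rw [show a - 1 = (a - d) + (d - 1) from by ring, add_div,
          div_self had0.ne', hx_def]
      have hmx : ((n - k : ℕ) : ℝ) * x ≤ T k := by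
        have hcast : ((n - k : ℕ) : ℝ) ≤ N := by
          rw [← hNdef]
          exact_mod_cast (by omega : n - k ≤ n)
        have hNa : N / a = (1 / N) ^ (k - 1) := by
          have h1 : a = N ^ (k - 1) * N := by
            rw [← ha_def, ← pow_succ]
            congr 1
            omega
          rw [h1, div_pow, one_pow,
            div_eq_div_iff (mul_pos (pow_pos hN0 _) hN0).ne' (pow_pos hN0 _).ne']
          ring
        have step : ((n - k : ℕ) : ℝ) * x ≤ N * (28 / 23 / a) := by
          apply mul_le_mul hcast hxsmall hx0 (by linarith)
        calc ((n - k : ℕ) : ℝ) * x ≤ N * (28 / 23 / a) := step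
        _ = 28 / 23 * (N / a) := by ring
        _ = T k := by rw [hNa, hT]
      have hTk4 : T k ≤ 4 / 23 := hTsmall k hk2
      have hTk0 : 0 ≤ T k := hT0 k
      have hTk1 : (0:ℝ) < 1 - T k := by linarith
      -- step ii
      have hstep2 : ((a - 1) / (a - d)) ^ (n - k) ≤ (1 - T k)⁻¹ := by
        rw [hratio]
        have hb1 : (1 + x) ≤ (1 - x)⁻¹ := by
          rw [inv_eq_one_div, le_div_iff₀ (by linarith : (0:ℝ) < 1 - x)]
          nlinarith
        have hbern : 1 - ((n - k : ℕ) : ℝ) * x ≤ (1 - x) ^ (n - k) := by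
          have hb := one_add_mul_le_pow (by linarith : (-2:ℝ) ≤ -x) (n - k)
          calc 1 - ((n - k : ℕ) : ℝ) * x = 1 + (n - k : ℕ) * (-x) := by ring
          _ ≤ (1 + -x) ^ (n - k) := hb
          _ = (1 - x) ^ (n - k) := by ring_nf
        calc (1 + x) ^ (n - k) ≤ ((1 - x)⁻¹) ^ (n - k) :=
              pow_le_pow_left₀ (by linarith) hb1 _
        _ = ((1 - x) ^ (n - k))⁻¹ := by rw [inv_pow]
        _ ≤ (1 - T k)⁻¹ := by
              apply inv_anti₀ hTk1
              linarith
      exact hstep1.trans hstep2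
    have htail : ∏ k ∈ Finset.Icc 2 (n - 1), f k ≤ 69 / 55 := by
      have hprodle : ∏ k ∈ Finset.Icc 2 (n - 1), f k ≤
          ∏ k ∈ Finset.Icc 2 (n - 1), (1 - T k)⁻¹ := by
        apply Finset.prod_le_prod
        · intro k hk
          rw [Finset.mem_Icc] at hk
          exact hfnonneg k (by omega)
        · exact htail_each
      have hW := aux_prod_one_sub (Finset.Icc 2 (n - 1)) T
        (fun i _ => hT0 i)
        (fun i hi => by
          rw [Finset.mem_Icc] at hi
          linarith [hTsmall i hi.1])
      have hprodpos : (55:ℝ) / 69 ≤ ∏ k ∈ Finset.Icc 2 (n - 1), (1 - T k) := by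
        calc (55:ℝ) / 69 = 1 - 14 / 69 := by norm_num
        _ ≤ 1 - ∑ k ∈ Finset.Icc 2 (n - 1), T k := by linarith
        _ ≤ _ := hW
      calc ∏ k ∈ Finset.Icc 2 (n - 1), f k
          ≤ (∏ k ∈ Finset.Icc 2 (n - 1), (1 - T k))⁻¹ := by
            rw [← Finset.prod_inv_distrib]; exact hprodle
      _ ≤ ((55:ℝ) / 69)⁻¹ := inv_anti₀ (by norm_num) hprodpos
      _ = 69 / 55 := by norm_num
    -- combine
    have htailnonneg : 0 ≤ ∏ k ∈ Finset.Icc 2 (n - 1), f k :=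
      Finset.prod_nonneg (fun k hk => by
        rw [Finset.mem_Icc] at hk
        exact hfnonneg k (by omega))
    calc f 1 * ∏ k ∈ Finset.Icc 2 (n - 1), f k
        ≤ 6 / 5 * (2.7182818286 * (17 / 14)) * (69 / 55) :=
          mul_le_mul hf1 htail htailnonneg (by norm_num)
    _ ≤ 5 := by norm_num
end

section
/- For n ≥ 6, the ratio Π_{k=2}^{n} (1 + 2/(n^k - 2n - 1))^{n-k} is at most 3/2. -/
open Finset

lemma geom_Icc_le (r : ℝ) (h0 : 0 ≤ r) (h1 : r < 1) (a b : ℕ) :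
    ∑ k ∈ Icc a b, r ^ k ≤ r ^ a / (1 - r) := by
  have h1' : 0 < 1 - r := by linarith
  have hne : r ≠ 1 := by linarith
  calc ∑ k ∈ Icc a b, r ^ k = ∑ k ∈ range (b + 1 - a), r ^ (a + k) := by
        rw [← Finset.Ico_add_one_right_eq_Icc, Finset.sum_Ico_eq_sum_range]
      _ = r ^ a * ∑ k ∈ range (b + 1 - a), r ^ k := by
        simp [pow_add, Finset.mul_sum]
      _ ≤ r ^ a * (1 / (1 - r)) := by
        apply mul_le_mul_of_nonneg_left _ (pow_nonneg h0 a)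
        rw [geom_sum_eq hne]
        have hm : 0 ≤ r ^ (b + 1 - a) := pow_nonneg h0 _
        have key : (r ^ (b + 1 - a) - 1) / (r - 1) = (1 - r ^ (b + 1 - a)) / (1 - r) := by
          rw [← neg_div_neg_eq]; ring_nf
        rw [key]
        gcongr
        linarith
      _ = r ^ a / (1 - r) := by ring

lemma exp_two_fifths_le : Real.exp (2 / 5) ≤ 3 / 2 := by
  have h5 : Real.exp (2 / 5) ^ 5 = Real.exp 2 := by
    rw [← Real.exp_nat_mul]; norm_num
  have he : Real.exp 2 ≤ (3 / 2 : ℝ) ^ 5 := by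
    have h1 : Real.exp 1 ≤ 2.7182818286 := Real.exp_one_lt_d9.le
    have : Real.exp 2 = Real.exp 1 * Real.exp 1 := by
      rw [← Real.exp_add]; norm_num
    nlinarith [Real.exp_pos 1]
  have := h5 ▸ he
  exact le_of_pow_le_pow_left₀ (by norm_num) (by norm_num) this

/-- For `n ≥ 6`, the ratio `Π_{k=2}^n (1 + 2/(n^k - 2n - 1))^{n-k}` is at most `3/2`. -/
theorem ratio_le (n : ℕ) (hn : 6 ≤ n) :
    ∏ k ∈ Finset.Icc 2 n, (1 + 2 / ((n : ℝ) ^ k - 2 * n - 1)) ^ (n - k) ≤ 3 / 2 := by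
  have hn6 : (6 : ℝ) ≤ n := by exact_mod_cast hn
  have hnpos : (0 : ℝ) < n := by linarith
  -- denominator lower bound
  have hden : ∀ k, 2 ≤ k → (23 / 36) * (n : ℝ) ^ k ≤ (n : ℝ) ^ k - 2 * n - 1 := by
    intro k hk
    have h2 : (n : ℝ) ^ 2 ≤ (n : ℝ) ^ k := pow_le_pow_right₀ (by linarith) hk
    have h13 : 72 * (n : ℝ) + 36 ≤ 13 * (n : ℝ) ^ 2 := by nlinarith
    nlinarith
  have hdenpos : ∀ k, 2 ≤ k → (0 : ℝ) < (n : ℝ) ^ k - 2 * n - 1 := by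
    intro k hk
    have := hden k hk
    have : (0:ℝ) < (23 / 36) * (n : ℝ) ^ k := by positivity
    linarith [hden k hk]
  -- step 1: bound product by exp of sum
  have step1 : ∏ k ∈ Finset.Icc 2 n, (1 + 2 / ((n : ℝ) ^ k - 2 * n - 1)) ^ (n - k)
      ≤ Real.exp (∑ k ∈ Finset.Icc 2 n, ((n - k : ℕ) : ℝ) * (2 / ((n : ℝ) ^ k - 2 * n - 1))) := by
    rw [Real.exp_sum]
    apply Finset.prod_le_prod
    · intro k hk
      have := hdenpos k (mem_Icc.mp hk).1
      positivity
    · intro k hk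
      have hd := hdenpos k (mem_Icc.mp hk).1
      have hx : (0:ℝ) ≤ 2 / ((n : ℝ) ^ k - 2 * n - 1) := by positivity
      calc (1 + 2 / ((n : ℝ) ^ k - 2 * n - 1)) ^ (n - k)
          ≤ Real.exp (2 / ((n : ℝ) ^ k - 2 * n - 1)) ^ (n - k) := by
            apply pow_le_pow_left₀ (by linarith)
            linarith [Real.add_one_le_exp (2 / ((n : ℝ) ^ k - 2 * n - 1))]
        _ = Real.exp (((n - k : ℕ) : ℝ) * (2 / ((n : ℝ) ^ k - 2 * n - 1))) := by
            rw [Real.exp_nat_mul]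
  -- step 2: sum bound
  have step2 : ∑ k ∈ Finset.Icc 2 n, ((n - k : ℕ) : ℝ) * (2 / ((n : ℝ) ^ k - 2 * n - 1))
      ≤ 2 / 5 := by
    have termbound : ∀ k, 2 ≤ k → 2 / ((n : ℝ) ^ k - 2 * n - 1) ≤ (72 / 23) * (1 / n) ^ k := by
      intro k hk
      have hd := hden k hk
      have hp : (0:ℝ) < (23 / 36) * (n : ℝ) ^ k := by positivity
      have h1 : 2 / ((n : ℝ) ^ k - 2 * n - 1) ≤ 2 / ((23 / 36) * (n : ℝ) ^ k) :=
        div_le_div_of_nonneg_left (by norm_num) hp hd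
      calc 2 / ((n : ℝ) ^ k - 2 * n - 1) ≤ 2 / ((23 / 36) * (n : ℝ) ^ k) := h1
        _ = (72 / 23) * (1 / n) ^ k := by
            rw [div_pow, one_pow]
            field_simp
            norm_num
  -- intermediate sum
    have hsum1 : ∑ k ∈ Finset.Icc 2 n, ((n - k : ℕ) : ℝ) * (2 / ((n : ℝ) ^ k - 2 * n - 1))
        ≤ ∑ k ∈ Finset.Icc 2 n, ((n - k : ℕ) : ℝ) * ((72 / 23) * (1 / n) ^ k) := by
      apply Finset.sum_le_sum
      intro k hk
      exact mul_le_mul_of_nonneg_left (termbound k (mem_Icc.mp hk).1) (by positivity)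
    have hsplit : Finset.Icc 2 n = insert 2 (Finset.Icc 3 n) := by
      ext x; simp [mem_Icc, mem_insert]; omega
    have hnotmem : 2 ∉ Finset.Icc 3 n := by simp
    have hsum2 : ∑ k ∈ Finset.Icc 2 n, ((n - k : ℕ) : ℝ) * ((72 / 23) * (1 / n) ^ k)
        = ((n - 2 : ℕ) : ℝ) * ((72 / 23) * (1 / n) ^ 2)
          + ∑ k ∈ Finset.Icc 3 n, ((n - k : ℕ) : ℝ) * ((72 / 23) * (1 / n) ^ k) := by
      rw [hsplit, Finset.sum_insert hnotmem]
    have htail : ∑ k ∈ Finset.Icc 3 n, ((n - k : ℕ) : ℝ) * ((72 / 23) * (1 / n) ^ k)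
        ≤ ((n - 3 : ℕ) : ℝ) * (72 / 23) * ((1 / n) ^ 3 / (1 - 1 / n)) := by
      calc ∑ k ∈ Finset.Icc 3 n, ((n - k : ℕ) : ℝ) * ((72 / 23) * (1 / n) ^ k)
          ≤ ∑ k ∈ Finset.Icc 3 n, ((n - 3 : ℕ) : ℝ) * ((72 / 23) * (1 / n) ^ k) := by
            apply Finset.sum_le_sum
            intro k hk
            have hk3 := (mem_Icc.mp hk).1
            have : ((n - k : ℕ) : ℝ) ≤ ((n - 3 : ℕ) : ℝ) := by
              exact_mod_cast Nat.sub_le_sub_left hk3 n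
            apply mul_le_mul_of_nonneg_right this (by positivity)
        _ = ((n - 3 : ℕ) : ℝ) * (72 / 23) * ∑ k ∈ Finset.Icc 3 n, (1 / n : ℝ) ^ k := by
            rw [Finset.mul_sum]; congr 1; ext k; ring
        _ ≤ ((n - 3 : ℕ) : ℝ) * (72 / 23) * ((1 / n) ^ 3 / (1 - 1 / n)) := by
            apply mul_le_mul_of_nonneg_left _ (by positivity)
            apply geom_Icc_le _ (by positivity)
            rw [div_lt_one hnpos]; linarith
    -- cast facts
    have hc2 : ((n - 2 : ℕ) : ℝ) = (n : ℝ) - 2 := by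
      have : (2:ℕ) ≤ n := by omega
      push_cast [this]; ring
    have hc3 : ((n - 3 : ℕ) : ℝ) = (n : ℝ) - 3 := by
      have : (3:ℕ) ≤ n := by omega
      push_cast [this]; ring
    have hfin : ((n : ℝ) - 2) * ((72 / 23) * (1 / n) ^ 2)
        + ((n : ℝ) - 3) * (72 / 23) * ((1 / n) ^ 3 / (1 - 1 / n)) ≤ 2 / 5 := by
      have h1 : (1 / (n:ℝ)) ^ 2 = 1 / n ^ 2 := by rw [div_pow, one_pow]
      have hne1 : (n:ℝ) ≠ 0 := ne_of_gt hnpos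
      have hgt1 : (0:ℝ) < (n:ℝ) - 1 := by linarith
      have hne2 : (n:ℝ) - 1 ≠ 0 := ne_of_gt hgt1
      have hne3 : (1:ℝ) - 1 / n ≠ 0 := by
        have : (1:ℝ) - 1 / n = ((n:ℝ) - 1) / n := by field_simp
        rw [this]; positivity
      have h2 : (1 / (n:ℝ)) ^ 3 / (1 - 1 / n) = 1 / (n ^ 2 * (n - 1)) := by
        rw [div_pow, one_pow]
        field_simp
      have heq : ((n:ℝ)-2)*((72/23)*(1/(n:ℝ)^2)) + ((n:ℝ)-3)*(72/23)*(1/((n:ℝ)^2*((n:ℝ)-1)))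
          = (72*((n:ℝ)-2)*((n:ℝ)-1) + 72*((n:ℝ)-3)) / (23*((n:ℝ)^2*((n:ℝ)-1))) := by
        field_simp
      rw [h1, h2, heq, div_le_div_iff₀ (by nlinarith : (0:ℝ) < 23*((n:ℝ)^2*((n:ℝ)-1))) (by norm_num : (0:ℝ) < 5)]
      nlinarith [mul_nonneg (by linarith : (0:ℝ) ≤ (n:ℝ)-6) (by nlinarith : (0:ℝ) ≤ 46*(n:ℝ)^2-130*(n:ℝ)-60)]
    calc ∑ k ∈ Finset.Icc 2 n, ((n - k : ℕ) : ℝ) * (2 / ((n : ℝ) ^ k - 2 * n - 1))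
        ≤ _ := hsum1
      _ = _ := hsum2
      _ ≤ ((n - 2 : ℕ) : ℝ) * ((72 / 23) * (1 / n) ^ 2)
          + ((n - 3 : ℕ) : ℝ) * (72 / 23) * ((1 / n) ^ 3 / (1 - 1 / n)) := by linarith [htail]
      _ ≤ 2 / 5 := by rw [hc2, hc3] at *; exact hfin
  calc ∏ k ∈ Finset.Icc 2 n, (1 + 2 / ((n : ℝ) ^ k - 2 * n - 1)) ^ (n - k)
      ≤ Real.exp (∑ k ∈ Finset.Icc 2 n, ((n - k : ℕ) : ℝ) * (2 / ((n : ℝ) ^ k - 2 * n - 1))) := step1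
    _ ≤ Real.exp (2 / 5) := Real.exp_le_exp.mpr step2
    _ ≤ 3 / 2 := exp_two_fifths_le
end
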